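/- For all a, b ∈ D_S, one has 𝔉(a) = 𝔉(b) if and only if F_a = F_b and E^u(a) = E^u(b) for every u ∈ V. (That is, two good valid inequalities for S can be rotated to define exactly the same collection of faces of P if and only if they define the same face of S and have the same minimizing rooted-triangle edge sets at every vertex.) -/

import Mathlib

open scoped BigOperators

abbrev Edge (n : ℕ) := {e : Sym2 (Fin n) // ¬ e.IsDiag}

namespace TSP
variable {n : ℕ}
noncomputable section

def dot (a x : Edge n → ℝ) : ℝ := ∑ e, a e * x e
def ev (a : Edge n → ℝ) (u v : Fin n) : ℝ :=
  if h : u = v then 0 else a ⟨s(u, v), fun hd => h (Sym2.mk_isDiag_iff.mp hd)⟩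
def indic (u v : Fin n) : Edge n → ℝ := fun e => if e.val = s(u, v) then 1 else 0
def delta (u : Fin n) : Edge n → ℝ := fun e => if u ∈ e.val then 1/2 else 0
def RootedTri (u v w : Fin n) : Prop := v ≠ w ∧ u ≠ v ∧ u ≠ w
def tri (a : Edge n → ℝ) (u v w : Fin n) : ℝ := ev a v u + ev a u w - ev a v w
def IsMetric (a : Edge n → ℝ) : Prop := ∀ u v w, RootedTri u v w → 0 ≤ tri a u v w
def IsTT (a : Edge n → ℝ) : Prop :=
  IsMetric a ∧ ∀ u, ∃ v w, RootedTri u v w ∧ tri a u v w = 0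
def lam (a : Edge n → ℝ) (u : Fin n) : ℝ :=
  sInf {r | ∃ v w, RootedTri u v w ∧ r = tri a u v w}
def theta (a : Edge n → ℝ) : Edge n → ℝ := fun e => a e - ∑ u, lam a u * delta u e
def zvec (n : ℕ) : Edge n → ℝ := fun _ => 2 / ((n : ℝ) - 1)
def gamma (a : Edge n → ℝ) : ℝ := -1 + dot a (zvec n) - ∑ u, lam a u
def nextF (i : Fin n) : Fin n := ⟨(i.val + 1) % n, Nat.mod_lt _ i.pos⟩
def hamVec (σ : Equiv.Perm (Fin n)) : Edge n → ℝ :=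
  fun e => if ∃ i : Fin n, e.val = s(σ i, σ (nextF i)) then 1 else 0
def stsp (n : ℕ) : Set (Edge n → ℝ) :=
  convexHull ℝ {x | ∃ σ : Equiv.Perm (Fin n), x = hamVec σ}
def degree (x : Edge n → ℝ) (u : Fin n) : ℝ := ∑ e, if u ∈ e.val then x e else 0
lemma ev_symm (a : Edge n → ℝ) (u v : Fin n) : ev a u v = ev a v u := by
  unfold ev
  rcases eq_or_ne u v with h | h
  · subst h; simp
  · rw [dif_neg h, dif_neg (Ne.symm h)]
    congr 1
    exact Subtype.ext (Sym2.eq_swap)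
def supportGraph (x : Edge n → ℝ) : SimpleGraph (Fin n) where
  Adj u v := u ≠ v ∧ 0 < ev x u v
  symm := ⟨fun u v h => ⟨h.1.symm, by rw [ev_symm]; exact h.2⟩⟩
  loopless := ⟨fun u h => h.1 rfl⟩
def IsEulerian (x : Edge n → ℝ) : Prop :=
  (∀ e, ∃ m : ℕ, x e = m) ∧ (supportGraph x).Connected ∧
    ∀ u, ∃ m : ℕ, 0 < m ∧ degree x u = 2 * m
def gtsp (n : ℕ) : Set (Edge n → ℝ) := convexHull ℝ {x | IsEulerian x}
def IsFaceOf (Q F : Set (Edge n → ℝ)) : Prop :=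
  ∃ a α, (∀ x ∈ Q, α ≤ dot a x) ∧ F = {x ∈ Q | dot a x = α}
def IsGood (F : Set (Edge n → ℝ)) : Prop := ∀ e : Edge n, ∃ x ∈ F, 0 < x e
def adim (X : Set (Edge n → ℝ)) : ℕ := Module.finrank ℝ (affineSpan ℝ X).direction
def direc (F : Set (Edge n → ℝ)) : Submodule ℝ (Edge n → ℝ) :=
  Submodule.span ℝ {d | ∃ x ∈ F, ∃ y ∈ F, d = y - x}
def shortcut (u v w : Fin n) : Edge n → ℝ :=
  fun e => indic v w e - indic v u e - indic u w e
def gtspPolar (n : ℕ) : Set (Edge n → ℝ) := {b | ∀ x ∈ gtsp n, 1 ≤ dot b x}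

/-- The face of `S` defined by `a ∈ D_S`. -/
def faceS (a : Edge n → ℝ) : Set (Edge n → ℝ) :=
  {x ∈ stsp n | dot a x = dot a (zvec n) - 1}

/-- `D_S`: the points `a ∈ L` whose inequality `a·x ≥ a·z − 1` is valid for `S`
and defines a nonempty good face of `S`. -/
def DS (n : ℕ) : Set (Edge n → ℝ) :=
  {a | (∀ u, dot (delta u) a = 0) ∧
       (∀ x ∈ stsp n, dot a (zvec n) - 1 ≤ dot a x) ∧
       (faceS a).Nonempty ∧ IsGood (faceS a)}

/-- `D_P`: TT points of `P^△` defining nonempty good faces of `P`. -/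
def DP (n : ℕ) : Set (Edge n → ℝ) :=
  {b | b ∈ gtspPolar n ∧ IsTT b ∧
       ({x ∈ gtsp n | dot b x = 1}).Nonempty ∧ IsGood {x ∈ gtsp n | dot b x = 1}}

/-- `𝔉(a)`: faces of `P` definable by rotated versions of `a·x ≥ a·z − 1`. -/
def Frot (a : Edge n → ℝ) : Set (Set (Edge n → ℝ)) :=
  {F | ∃ ξ : Fin n → ℝ,
    (∀ x ∈ gtsp n,
      dot a (zvec n) - 1 + dot (∑ u, ξ u • delta u) (zvec n)
        ≤ dot (a + ∑ u, ξ u • delta u) x) ∧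
    F = {x ∈ gtsp n |
      dot (a + ∑ u, ξ u • delta u) x
        = dot a (zvec n) - 1 + dot (∑ u, ξ u • delta u) (zvec n)}}

/-- `E^u(a)`: the edges achieving the minimal triangle slack rooted at `u`. -/
def Eu (a : Edge n → ℝ) (u : Fin n) : Set (Edge n) :=
  {e | ∃ v w, RootedTri u v w ∧ e.val = s(v, w) ∧ tri a u v w = lam a u}

def IsFacetP (n : ℕ) (G : Set (Edge n → ℝ)) : Prop :=
  IsFaceOf (gtsp n) G ∧ adim G = n * (n - 1) / 2 - 1
def IsFacetS (n : ℕ) (F : Set (Edge n → ℝ)) : Prop :=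
  IsFaceOf (stsp n) F ∧ adim F + 1 = adim (stsp n)
def IsNRFacet (n : ℕ) (G : Set (Edge n → ℝ)) : Prop :=
  IsFacetP n G ∧ IsFacetS n (G ∩ stsp n)
def IsDegreeFacet (n : ℕ) (G : Set (Edge n → ℝ)) : Prop :=
  ∃ u, G = {x ∈ gtsp n | dot (delta u) x = 1}
def IsNonNegFacet (n : ℕ) (G : Set (Edge n → ℝ)) : Prop :=
  ∃ e : Edge n, G = {x ∈ gtsp n | x e = 0}
def IsNonNRFacet (n : ℕ) (G : Set (Edge n → ℝ)) : Prop :=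
  IsFacetP n G ∧ IsGood G ∧ ¬ IsDegreeFacet n G ∧
    adim (G ∩ stsp n) + 1 < adim (stsp n)

/-- Solution set of the relaxation `R_B` (degree inequalities). -/
def RBge {k : ℕ} (n : ℕ) (b : Fin k → Edge n → ℝ) : Set (Edge n → ℝ) :=
  {x | (∀ j, 1 ≤ dot (b j) x) ∧ (∀ v, 1 ≤ dot (delta v) x) ∧ ∀ e, 0 ≤ x e}

/-- Solution set of `R_B` with degree equations. -/
def RBeq {k : ℕ} (n : ℕ) (b : Fin k → Edge n → ℝ) : Set (Edge n → ℝ) :=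
  {x | (∀ j, 1 ≤ dot (b j) x) ∧ (∀ v, dot (delta v) x = 1) ∧ ∀ e, 0 ≤ x e}

/-- The parsimonious property of the relaxation `R_B`. -/
def Parsimonious {k : ℕ} (n : ℕ) (b : Fin k → Edge n → ℝ) : Prop :=
  ∀ c : Edge n → ℝ, IsMetric c →
    sInf (dot c '' RBge n b) = sInf (dot c '' RBeq n b)

/-- Adjacency in the ridge graph of `P`. -/
def RidgeAdj (n : ℕ) (F G : Set (Edge n → ℝ)) : Prop :=
  IsFacetP n F ∧ IsFacetP n G ∧ F ≠ G ∧ adim (F ∩ G) = n * (n - 1) / 2 - 2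

/-- `q_I = Σ_{u ∉ I} δ_u`. -/
def qI (n : ℕ) (I : Finset (Fin n)) : Edge n → ℝ := ∑ u ∈ Iᶜ, delta u

/-- The face `G_I` of `P`. -/
def GI (n : ℕ) (a : Edge n → ℝ) (I : Finset (Fin n)) : Set (Edge n → ℝ) :=
  {x ∈ gtsp n | dot (theta a + qI n I) x = gamma a + dot (qI n I) (zvec n)}

end

noncomputable section Aux
open Finset

variable {n : ℕ}

lemma edge_not_diag {u v : Fin n} (h : u ≠ v) : ¬ (s(u,v) : Sym2 (Fin n)).IsDiag :=
  fun hd => h (Sym2.mk_isDiag_iff.mp hd)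

def edg {u v : Fin n} (h : u ≠ v) : Edge n := ⟨s(u,v), edge_not_diag h⟩

lemma ev_ne (a : Edge n → ℝ) {u v : Fin n} (h : u ≠ v) : ev a u v = a (edg h) := dif_neg h

lemma edge_cases (e : Edge n) : ∃ (u v : Fin n) (h : u ≠ v), e = edg h := by
  obtain ⟨s, hs⟩ := e
  induction s with
  | _ u v =>
    exact ⟨u, v, fun huv => hs (Sym2.mk_isDiag_iff.mpr huv), rfl⟩

lemma edg_val {u v : Fin n} (h : u ≠ v) : (edg h).val = s(u,v) := rfl

lemma mem_edg {s u v : Fin n} (h : u ≠ v) : s ∈ (edg h).val ↔ s = u ∨ s = v := Sym2.mem_iff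

lemma edg_eq_iff {u v p q : Fin n} (h : u ≠ v) (h' : p ≠ q) :
    edg h = edg h' ↔ (u = p ∧ v = q) ∨ (u = q ∧ v = p) := by
  rw [Subtype.ext_iff, edg_val, edg_val, Sym2.eq_iff]

lemma edg_symm {u v : Fin n} (h : u ≠ v) : edg h.symm = edg h :=
  Subtype.ext Sym2.eq_swap

lemma dot_add_left (a b x : Edge n → ℝ) : dot (a + b) x = dot a x + dot b x := by
  simp [dot, add_mul, Finset.sum_add_distrib]

lemma dot_add (a x y : Edge n → ℝ) : dot a (x + y) = dot a x + dot a y := by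
  simp [dot, mul_add, Finset.sum_add_distrib]

lemma dot_sub (a x y : Edge n → ℝ) : dot a (x - y) = dot a x - dot a y := by
  simp [dot, mul_sub, Finset.sum_sub_distrib]

lemma dot_smul (a : Edge n → ℝ) (c : ℝ) (x : Edge n → ℝ) : dot a (c • x) = c * dot a x := by
  simp [dot, Finset.mul_sum]; apply Finset.sum_congr rfl; intros; ring

def dotL (c : Edge n → ℝ) : (Edge n → ℝ) →ₗ[ℝ] ℝ where
  toFun x := dot c x
  map_add' := dot_add c
  map_smul' c' x := dot_smul c c' x

lemma dot_indic (a : Edge n → ℝ) {u v : Fin n} (h : u ≠ v) : dot a (indic u v) = a (edg h) := by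
  unfold dot indic
  have : ∀ e : Edge n, e.val = s(u,v) ↔ e = edg h := by
    intro e; rw [Subtype.ext_iff]; rfl
  calc ∑ e, a e * (if e.val = s(u,v) then (1:ℝ) else 0)
      = ∑ e, (if e = edg h then a e else 0) := by
        apply Finset.sum_congr rfl; intro e _
        by_cases he : e = edg h
        · rw [if_pos he, if_pos ((this e).mpr he), mul_one]
        · rw [if_neg he, if_neg (fun hc => he ((this e).mp hc)), mul_zero]
    _ = a (edg h) := by rw [Finset.sum_ite_eq' Finset.univ (edg h) a, if_pos (Finset.mem_univ _)]

lemma indic_apply {u v : Fin n} (h : u ≠ v) (e : Edge n) :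
    indic u v e = if e = edg h then 1 else 0 := by
  unfold indic
  congr 1
  simp only [eq_iff_iff]
  rw [Subtype.ext_iff]; rfl

lemma dot_delta_indic (t : Fin n) {u v : Fin n} (h : u ≠ v) :
    dot (delta t) (indic u v) = if t = u ∨ t = v then 1/2 else 0 := by
  rw [dot_indic _ h]
  unfold delta
  congr 1
  simp only [eq_iff_iff, mem_edg]

lemma dot_delta_half (x : Edge n → ℝ) (u : Fin n) : dot (delta u) x = degree x u / 2 := by
  unfold dot delta degree
  rw [Finset.sum_div]
  apply Finset.sum_congr rfl; intro e _
  by_cases h : u ∈ e.val <;> simp [h] <;> ring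

lemma degree_eq_sum_ev (x : Edge n → ℝ) (u : Fin n) :
    degree x u = ∑ v ∈ Finset.univ.erase u, ev x u v := by
  unfold degree
  rw [← Finset.sum_filter]
  refine (Finset.sum_bij (fun v hv => edg (fun h : u = v => (Finset.mem_erase.mp hv).1 h.symm))
    ?_ ?_ ?_ ?_).symm
  · intro v hv; simp only [Finset.mem_filter, Finset.mem_univ, true_and]
    exact Sym2.mem_mk_left u v
  · intro v hv v' hv' heq
    have := (Subtype.ext_iff.mp heq)
    rw [edg_val, edg_val, Sym2.eq_iff] at this
    rcases this with ⟨_, h2⟩ | ⟨h1, h2⟩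
    · exact h2
    · exact absurd h2 (Finset.mem_erase.mp hv).1
  · intro e he
    obtain ⟨p, q, hpq, rfl⟩ := edge_cases e
    have hu : u ∈ (edg hpq).val := (Finset.mem_filter.mp he).2
    rw [mem_edg] at hu
    rcases hu with rfl | rfl
    · exact ⟨q, Finset.mem_erase.mpr ⟨hpq.symm, Finset.mem_univ q⟩, rfl⟩
    · refine ⟨p, Finset.mem_erase.mpr ⟨hpq, Finset.mem_univ p⟩, ?_⟩
      exact Subtype.ext Sym2.eq_swap
  · intro v hv
    exact ev_ne x _

/-! ### Integer-valued vectors -/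

def NatLike (x : Edge n → ℝ) : Prop := ∀ e, ∃ m : ℕ, x e = m

lemma NatLike.nonneg {x : Edge n → ℝ} (h : NatLike x) (e : Edge n) : 0 ≤ x e := by
  obtain ⟨m, hm⟩ := h e; rw [hm]; exact_mod_cast Nat.zero_le m

lemma NatLike.one_le {x : Edge n → ℝ} (h : NatLike x) {e : Edge n} (hp : 0 < x e) : 1 ≤ x e := by
  obtain ⟨m, hm⟩ := h e; rw [hm] at hp ⊢; exact_mod_cast Nat.one_le_iff_ne_zero.mpr
    (fun h0 => by simp [h0] at hp)

lemma NatLike.eq_zero_or_one_le {x : Edge n → ℝ} (h : NatLike x) (e : Edge n) :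
    x e = 0 ∨ 1 ≤ x e := by
  rcases eq_or_lt_of_le (h.nonneg e) with h0 | h1
  · exact Or.inl h0.symm
  · exact Or.inr (h.one_le h1)

lemma natlike_hamVec (σ : Equiv.Perm (Fin n)) : NatLike (hamVec σ) := by
  intro e; unfold hamVec
  by_cases h : ∃ i : Fin n, e.val = s(σ i, σ (nextF i))
  · exact ⟨1, by simp [h]⟩
  · exact ⟨0, by simp [h]⟩

lemma hamVec_eq_zero_or_one (σ : Equiv.Perm (Fin n)) (e : Edge n) :
    hamVec σ e = 0 ∨ hamVec σ e = 1 := by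
  unfold hamVec; by_cases h : ∃ i : Fin n, e.val = s(σ i, σ (nextF i)) <;> simp [h]

lemma ev_add (x y : Edge n → ℝ) (u v : Fin n) : ev (x + y) u v = ev x u v + ev y u v := by
  unfold ev; by_cases h : u = v <;> simp [h]

lemma ev_nonneg {x : Edge n → ℝ} (h : NatLike x) (u v : Fin n) : 0 ≤ ev x u v := by
  unfold ev; by_cases huv : u = v
  · simp [huv]
  · simp only [dif_neg huv]; exact h.nonneg _

/-! ### size -/

def sz (x : Edge n → ℝ) : ℕ := ∑ e, ⌊x e⌋₊

lemma NatLike.floor_eq {x : Edge n → ℝ} (h : NatLike x) (e : Edge n) : (⌊x e⌋₊ : ℝ) = x e := by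
  obtain ⟨m, hm⟩ := h e; rw [hm, Nat.floor_natCast]

lemma NatLike.add_indic {x : Edge n → ℝ} (h : NatLike x) {u v : Fin n} (huv : u ≠ v) :
    NatLike (x + indic u v) := by
  intro e
  obtain ⟨m, hm⟩ := h e
  by_cases he : e = edg huv
  · subst he; exact ⟨m + 1, by simp [indic_apply huv, hm]⟩
  · exact ⟨m, by simp [indic_apply huv, he, hm]⟩

lemma sz_add_indic {x : Edge n → ℝ} (h : NatLike x) {u v : Fin n} (huv : u ≠ v) :
    sz (x + indic u v) = sz x + 1 := by
  unfold sz
  rw [← Finset.sum_erase_add _ _ (Finset.mem_univ (edg huv)),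
      ← Finset.sum_erase_add _ (fun e => ⌊x e⌋₊) (Finset.mem_univ (edg huv))]
  have h1 : ∀ e ∈ Finset.univ.erase (edg huv), ⌊(x + indic u v) e⌋₊ = ⌊x e⌋₊ := by
    intro e he
    have : e ≠ edg huv := (Finset.mem_erase.mp he).1
    simp [indic_apply huv, this]
  rw [Finset.sum_congr rfl h1]
  have : (x + indic u v) (edg huv) = x (edg huv) + 1 := by simp [indic_apply huv]
  obtain ⟨m, hm⟩ := h (edg huv)
  rw [this, hm]
  rw [Nat.floor_natCast]
  have : (m : ℝ) + 1 = ((m + 1 : ℕ) : ℝ) := by push_cast; ring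
  rw [this, Nat.floor_natCast]
  omega

/-! ### graph lemmas -/

lemma reach_mono {G H : SimpleGraph (Fin n)} (h : ∀ p q, G.Adj p q → H.Reachable p q) :
    ∀ {p q}, G.Reachable p q → H.Reachable p q := by
  intro p q hr
  obtain ⟨w⟩ := hr
  induction w with
  | nil => exact SimpleGraph.Reachable.refl _
  | cons ha _ ih => exact (h _ _ ha).trans ih

lemma closed_reach {G : SimpleGraph (Fin n)} {S : Set (Fin n)}
    (hcl : ∀ p q, p ∈ S → G.Adj p q → q ∈ S) {p q} (hq : G.Reachable p q) (hp : p ∈ S) :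
    q ∈ S := by
  obtain ⟨w⟩ := hq
  induction w with
  | nil => exact hp
  | cons ha _ ih => exact ih (hcl _ _ hp ha)

lemma support_adj {x : Edge n → ℝ} {p q : Fin n} :
    (supportGraph x).Adj p q ↔ p ≠ q ∧ 0 < ev x p q := Iff.rfl

/-! ### hull lemmas -/

lemma hull_le {D : Set (Edge n → ℝ)} {c : Edge n → ℝ} {r : ℝ} (h : ∀ y ∈ D, r ≤ dot c y)
    {x} (hx : x ∈ convexHull ℝ D) : r ≤ dot c x := by
  have hc : Convex ℝ {y : Edge n → ℝ | r ≤ dot c y} :=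
    convex_halfSpace_ge (dotL c).isLinear r
  exact convexHull_min h hc hx

lemma hull_rep {D : Set (Edge n → ℝ)} {x} (hx : x ∈ convexHull ℝ D) :
    ∃ (ι : Type) (t : Finset ι) (w : ι → ℝ) (z : ι → Edge n → ℝ),
      (∀ i ∈ t, 0 ≤ w i) ∧ ∑ i ∈ t, w i = 1 ∧ (∀ i ∈ t, z i ∈ D) ∧ x = ∑ i ∈ t, w i • z i := by
  rw [_root_.convexHull_eq] at hx
  obtain ⟨ι, t, w, z, hw0, hw1, hz, hx⟩ := hx
  exact ⟨ι, t, w, z, hw0, hw1, hz, by rw [← hx, Finset.centerMass_eq_of_sum_1 _ _ hw1]⟩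

lemma dot_finsum {ι : Type} (c : Edge n → ℝ) (t : Finset ι) (w : ι → ℝ) (z : ι → Edge n → ℝ) :
    dot c (∑ i ∈ t, w i • z i) = ∑ i ∈ t, w i * dot c (z i) := by
  rw [show dot c (∑ i ∈ t, w i • z i) = dotL c (∑ i ∈ t, w i • z i) from rfl, map_sum]
  apply Finset.sum_congr rfl; intro i _
  simp [dotL, dot_smul]

lemma hull_tight_core {D : Set (Edge n → ℝ)} {c : Edge n → ℝ} {r : ℝ}
    (hval : ∀ y ∈ D, r ≤ dot c y) {x} (hx : x ∈ convexHull ℝ D) (ht : dot c x = r) :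
    ∃ (ι : Type) (t : Finset ι) (w : ι → ℝ) (z : ι → Edge n → ℝ),
      (∀ i ∈ t, 0 ≤ w i) ∧ ∑ i ∈ t, w i = 1 ∧ (∀ i ∈ t, z i ∈ D) ∧ x = ∑ i ∈ t, w i • z i ∧
      (∀ i ∈ t, 0 < w i → dot c (z i) = r) := by
  obtain ⟨ι, t, w, z, hw0, hw1, hz, hxe⟩ := hull_rep hx
  refine ⟨ι, t, w, z, hw0, hw1, hz, hxe, ?_⟩
  have hsum : ∑ i ∈ t, w i * (dot c (z i) - r) = 0 := by
    have : ∑ i ∈ t, w i * (dot c (z i) - r) = dot c x - r * (∑ i ∈ t, w i) := by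
      rw [hxe, dot_finsum, Finset.mul_sum, ← Finset.sum_sub_distrib]
      apply Finset.sum_congr rfl; intros; ring
    rw [this, hw1, ht]; ring
  have hnn : ∀ i ∈ t, 0 ≤ w i * (dot c (z i) - r) := fun i hi =>
    mul_nonneg (hw0 i hi) (sub_nonneg.mpr (hval _ (hz i hi)))
  have hzero := (Finset.sum_eq_zero_iff_of_nonneg hnn).mp hsum
  intro i hi hwi
  have := hzero i hi
  have h2 : dot c (z i) - r = 0 := by
    rcases mul_eq_zero.mp this with h | h
    · exact absurd h (ne_of_gt hwi)
    · exact h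
  linarith

lemma hull_tight_transfer {D : Set (Edge n → ℝ)} {c c' : Edge n → ℝ} {r r' : ℝ}
    (hval : ∀ y ∈ D, r ≤ dot c y) (htr : ∀ y ∈ D, dot c y = r → dot c' y = r')
    {x} (hx : x ∈ convexHull ℝ D) (ht : dot c x = r) : dot c' x = r' := by
  obtain ⟨ι, t, w, z, hw0, hw1, hz, hxe, htight⟩ := hull_tight_core hval hx ht
  rw [hxe, dot_finsum]
  have : ∀ i ∈ t, w i * dot c' (z i) = w i * r' := by
    intro i hi
    rcases eq_or_lt_of_le (hw0 i hi) with h0 | h0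
    · rw [← h0]; ring
    · rw [htr _ (hz i hi) (htight i hi h0)]
  rw [Finset.sum_congr rfl this, ← Finset.sum_mul, hw1, one_mul]

lemma hull_tight_witness {D : Set (Edge n → ℝ)} {c : Edge n → ℝ} {r : ℝ}
    (hval : ∀ y ∈ D, r ≤ dot c y) {x} (hx : x ∈ convexHull ℝ D) (ht : dot c x = r)
    {e : Edge n} (he : 0 < x e) (hnn : ∀ y ∈ D, 0 ≤ y e) :
    ∃ y ∈ D, dot c y = r ∧ 0 < y e := by
  obtain ⟨ι, t, w, z, hw0, hw1, hz, hxe, htight⟩ := hull_tight_core hval hx ht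
  have hxee : x e = ∑ i ∈ t, w i * z i e := by
    rw [hxe]; simp [Finset.sum_apply]
  by_contra hcon
  push_neg at hcon
  have : ∀ i ∈ t, w i * z i e = 0 := by
    intro i hi
    rcases eq_or_lt_of_le (hw0 i hi) with h0 | h0
    · rw [← h0, zero_mul]
    · have hz0 := hcon (z i) (hz i hi) (htight i hi h0)
      have := hnn (z i) (hz i hi)
      have : z i e = 0 := le_antisymm hz0 this
      rw [this, mul_zero]
  rw [hxee, Finset.sum_eq_zero this] at he
  exact lt_irrefl 0 he

/-! ### lambda lemmas -/

lemma exists_third (hn : 3 ≤ n) (u v : Fin n) : ∃ w : Fin n, w ≠ u ∧ w ≠ v := by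
  have hne : ((Finset.univ : Finset (Fin n)) \ {u, v}).Nonempty := by
    apply Finset.card_pos.mp
    have h1 : ({u, v} : Finset (Fin n)).card ≤ 2 := Finset.card_insert_le _ _ |>.trans (by simp)
    have h2 := Finset.le_card_sdiff ({u, v} : Finset (Fin n)) Finset.univ
    have h3 : (Finset.univ : Finset (Fin n)).card = n := by
      rw [Finset.card_univ, Fintype.card_fin]
    omega
  obtain ⟨w, hw⟩ := hne
  rw [Finset.mem_sdiff, Finset.mem_insert, Finset.mem_singleton] at hw
  exact ⟨w, fun h => hw.2 (Or.inl h), fun h => hw.2 (Or.inr h)⟩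

lemma exists_rooted (hn : 3 ≤ n) (u : Fin n) : ∃ v w, RootedTri u v w := by
  obtain ⟨v, hv, -⟩ := exists_third hn u u
  obtain ⟨w, hwu, hwv⟩ := exists_third hn u v
  exact ⟨v, w, fun h => hwv h.symm, fun h => hv h.symm, fun h => hwu h.symm⟩

lemma lam_set_fin (a : Edge n → ℝ) (u : Fin n) :
    {r | ∃ v w, RootedTri u v w ∧ r = tri a u v w}.Finite := by
  apply Set.Finite.subset (Set.finite_range (fun p : Fin n × Fin n => tri a u p.1 p.2))
  rintro r ⟨v, w, _, rfl⟩
  exact ⟨(v, w), rfl⟩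

lemma lam_le (hn : 3 ≤ n) (a : Edge n → ℝ) {u v w : Fin n} (h : RootedTri u v w) :
    lam a u ≤ tri a u v w :=
  csInf_le (lam_set_fin a u).bddBelow ⟨v, w, h, rfl⟩

lemma lam_spec (hn : 3 ≤ n) (a : Edge n → ℝ) (u : Fin n) :
    ∃ v w, RootedTri u v w ∧ tri a u v w = lam a u := by
  have hne : {r | ∃ v w, RootedTri u v w ∧ r = tri a u v w}.Nonempty := by
    obtain ⟨v, w, h⟩ := exists_rooted hn u
    exact ⟨tri a u v w, v, w, h, rfl⟩
  obtain ⟨v, w, h, hr⟩ := hne.csInf_mem (lam_set_fin a u)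
  exact ⟨v, w, h, hr.symm⟩

lemma tri_swap (a : Edge n → ℝ) (u v w : Fin n) : tri a u v w = tri a u w v := by
  unfold tri
  rw [ev_symm a v u, ev_symm a w u, ev_symm a v w]
  ring

lemma tri_add_tri (a : Edge n → ℝ) (u v w : Fin n) :
    tri a u v w + tri a v u w = 2 * ev a u v := by
  unfold tri
  rw [ev_symm a v u]
  ring

lemma two_lam_le (hn : 3 ≤ n) (a : Edge n → ℝ) {u v : Fin n} (h : u ≠ v) :
    lam a u + lam a v ≤ 2 * ev a u v := by
  obtain ⟨w, hwu, hwv⟩ := exists_third hn u v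
  have h1 : RootedTri u v w := ⟨fun hc => hwv hc.symm, h, fun hc => hwu hc.symm⟩
  have h2 : RootedTri v u w := ⟨fun hc => hwu hc.symm, h.symm, fun hc => hwv hc.symm⟩
  have := lam_le hn a h1
  have := lam_le hn a h2
  have := tri_add_tri a u v w
  linarith

/-! ### rotation computations -/

lemma dot_sum_left {ι : Type} (t : Finset ι) (g : ι → Edge n → ℝ) (x : Edge n → ℝ) :
    dot (∑ i ∈ t, g i) x = ∑ i ∈ t, dot (g i) x := by
  unfold dot
  rw [Finset.sum_comm]
  apply Finset.sum_congr rfl; intro e _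
  rw [Finset.sum_apply, Finset.sum_mul]

lemma dot_rot (a : Edge n → ℝ) (ξ : Fin n → ℝ) (x : Edge n → ℝ) :
    dot (a + ∑ u, ξ u • delta u) x = dot a x + ∑ u, ξ u * dot (delta u) x := by
  rw [dot_add_left, dot_sum_left]
  congr 1
  apply Finset.sum_congr rfl; intro u _
  unfold dot
  rw [Finset.mul_sum]
  apply Finset.sum_congr rfl; intro e _
  simp [Pi.smul_apply, smul_eq_mul]; ring

lemma dot_delta_zvec (hn : 2 ≤ n) (u : Fin n) : dot (delta u) (zvec n) = 1 := by
  rw [dot_delta_half, degree_eq_sum_ev]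
  have : ∀ v ∈ Finset.univ.erase u, ev (zvec n) u v = 2 / ((n:ℝ) - 1) := by
    intro v hv
    rw [ev_ne _ (fun h : u = v => (Finset.mem_erase.mp hv).1 h.symm)]
    rfl
  rw [Finset.sum_congr rfl this, Finset.sum_const, Finset.card_erase_of_mem (Finset.mem_univ u),
    Finset.card_univ, Fintype.card_fin, nsmul_eq_mul]
  have hne : (n : ℝ) - 1 ≠ 0 := by
    have : (2:ℝ) ≤ n := by exact_mod_cast hn
    intro hc; rw [sub_eq_zero] at hc; rw [hc] at this; norm_num at this
  have hcast : ((n - 1 : ℕ) : ℝ) = (n : ℝ) - 1 := by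
    have : 1 ≤ n := by omega
    push_cast [this]; ring
  rw [hcast]
  field_simp

lemma rot_z (hn : 2 ≤ n) (ξ : Fin n → ℝ) :
    dot (∑ u, ξ u • delta u) (zvec n) = ∑ u, ξ u := by
  have := dot_rot (0 : Edge n → ℝ) ξ (zvec n)
  rw [zero_add] at this
  rw [this]
  have h0 : dot (0 : Edge n → ℝ) (zvec n) = 0 := by simp [dot]
  rw [h0, zero_add]
  apply Finset.sum_congr rfl; intro u _
  rw [dot_delta_zvec hn, mul_one]

/-! ### nextF / prevF arithmetic -/

def prevF (i : Fin n) : Fin n := ⟨(i.val + (n-1)) % n, Nat.mod_lt _ i.pos⟩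

lemma nextF_prevF (i : Fin n) : nextF (prevF i) = i := by
  have hpos : 0 < n := i.pos
  apply Fin.ext
  show ((i.val + (n-1)) % n + 1) % n = i.val
  rw [Nat.mod_add_mod]
  have : i.val + (n-1) + 1 = i.val + n := by omega
  rw [this, Nat.add_mod_right, Nat.mod_eq_of_lt i.isLt]

lemma prevF_nextF (i : Fin n) : prevF (nextF i) = i := by
  have hpos : 0 < n := i.pos
  apply Fin.ext
  show ((i.val + 1) % n + (n-1)) % n = i.val
  rw [Nat.mod_add_mod]
  have : i.val + 1 + (n-1) = i.val + n := by omega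
  rw [this, Nat.add_mod_right, Nat.mod_eq_of_lt i.isLt]

lemma nextF_ne (hn : 2 ≤ n) (i : Fin n) : nextF i ≠ i := by
  intro h
  have hv : (i.val + 1) % n = i.val := Fin.val_eq_of_eq h
  rcases Nat.lt_or_ge (i.val + 1) n with hlt | hge
  · rw [Nat.mod_eq_of_lt hlt] at hv; omega
  · have : i.val + 1 = n := by have := i.isLt; omega
    rw [this, Nat.mod_self] at hv
    omega

lemma prevF_ne (hn : 2 ≤ n) (i : Fin n) : prevF i ≠ i := by
  intro h
  have := nextF_prevF i
  rw [h] at this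
  exact nextF_ne hn i this

lemma nextF_inj {i j : Fin n} (h : nextF i = nextF j) : i = j := by
  rw [← prevF_nextF i, h, prevF_nextF]

lemma nextF_nextF_ne (hn : 3 ≤ n) (i : Fin n) : nextF (nextF i) ≠ i := by
  intro h
  have hv : ((i.val + 1) % n + 1) % n = i.val := Fin.val_eq_of_eq h
  rw [Nat.mod_add_mod] at hv
  have hi := i.isLt
  rcases Nat.lt_or_ge (i.val + 2) n with hlt | hge
  · rw [show i.val + 1 + 1 = i.val + 2 from rfl, Nat.mod_eq_of_lt hlt] at hv; omega
  · have h2 : i.val + 1 + 1 = (i.val + 2 - n) + n := by omega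
    rw [h2, Nat.add_mod_right, Nat.mod_eq_of_lt (by omega)] at hv
    omega

lemma prevF_ne_nextF (hn : 3 ≤ n) (i : Fin n) : prevF i ≠ nextF i := by
  intro h
  have : nextF (nextF i) = i := by
    rw [← h, nextF_prevF]
  exact nextF_nextF_ne hn i this

/-! ### hamVec facts -/

lemma sigma_nextF_ne (hn : 2 ≤ n) (σ : Equiv.Perm (Fin n)) (i : Fin n) :
    σ i ≠ σ (nextF i) := fun h => nextF_ne hn i (σ.injective h.symm)

lemma hamVec_nonneg (σ : Equiv.Perm (Fin n)) (e : Edge n) : 0 ≤ hamVec σ e :=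
  (natlike_hamVec σ).nonneg e

lemma hamVec_cyc (hn : 2 ≤ n) (σ : Equiv.Perm (Fin n)) (i : Fin n) :
    hamVec σ (edg (sigma_nextF_ne hn σ i)) = 1 := by
  unfold hamVec
  rw [if_pos ⟨i, rfl⟩]

lemma hamVec_adj (hn : 2 ≤ n) (σ : Equiv.Perm (Fin n)) (i : Fin n) :
    (supportGraph (hamVec σ)).Adj (σ i) (σ (nextF i)) := by
  refine ⟨sigma_nextF_ne hn σ i, ?_⟩
  rw [ev_ne _ (sigma_nextF_ne hn σ i), hamVec_cyc hn σ i]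
  norm_num

lemma hamVec_connected (hn : 2 ≤ n) (σ : Equiv.Perm (Fin n)) :
    (supportGraph (hamVec σ)).Connected := by
  have hpos : 0 < n := by omega
  have key : ∀ m : ℕ, (supportGraph (hamVec σ)).Reachable (σ ⟨0, hpos⟩)
      (σ ⟨m % n, Nat.mod_lt _ hpos⟩) := by
    intro m
    induction m with
    | zero =>
      apply SimpleGraph.Reachable.refl
    | succ k ih =>
      refine ih.trans ?_
      have := (hamVec_adj hn σ ⟨k % n, Nat.mod_lt _ hpos⟩).reachable
      have heq : nextF ⟨k % n, Nat.mod_lt _ hpos⟩ = ⟨(k+1) % n, Nat.mod_lt _ hpos⟩ := by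
        apply Fin.ext
        show (k % n + 1) % n = (k + 1) % n
        rw [Nat.mod_add_mod]
      rwa [heq] at this
  haveI : Nonempty (Fin n) := ⟨⟨0, hpos⟩⟩
  refine ⟨fun p q => ?_⟩
  have hp : σ ⟨(σ.symm p).val % n, Nat.mod_lt _ hpos⟩ = p := by
    have h : (⟨(σ.symm p).val % n, Nat.mod_lt _ hpos⟩ : Fin n) = σ.symm p :=
      Fin.ext (Nat.mod_eq_of_lt (σ.symm p).isLt)
    rw [h]; simp
  have hq : σ ⟨(σ.symm q).val % n, Nat.mod_lt _ hpos⟩ = q := by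
    have h : (⟨(σ.symm q).val % n, Nat.mod_lt _ hpos⟩ : Fin n) = σ.symm q :=
      Fin.ext (Nat.mod_eq_of_lt (σ.symm q).isLt)
    rw [h]; simp
  have := ((key (σ.symm p).val).symm.trans (key (σ.symm q).val))
  rwa [hp, hq] at this

lemma mem_e1 (hn : 3 ≤ n) (σ : Equiv.Perm (Fin n)) (k : Fin n) :
    σ (prevF k) ≠ σ k := by
  intro h
  exact prevF_ne (by omega) k (σ.injective h)

lemma degree_hamVec (hn : 3 ≤ n) (σ : Equiv.Perm (Fin n)) (u : Fin n) :
    degree (hamVec σ) u = 2 := by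
  set k := σ.symm u with hk
  have hu : u = σ k := by simp [hk]
  have h1 : σ (prevF k) ≠ σ k := mem_e1 hn σ k
  have h2 : σ k ≠ σ (nextF k) := sigma_nextF_ne (by omega) σ k
  set e1 : Edge n := edg h1 with he1
  set e2 : Edge n := edg h2 with he2
  have he12 : e1 ≠ e2 := by
    intro h
    rw [he1, he2, edg_eq_iff] at h
    rcases h with ⟨ha, _⟩ | ⟨ha, hb⟩
    · exact prevF_ne (by omega) k (σ.injective ha)
    · exact prevF_ne_nextF hn k (σ.injective ha)
  have key : ∀ e : Edge n, (if u ∈ e.val then hamVec σ e else 0)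
      = (if e = e1 then (1:ℝ) else 0) + (if e = e2 then (1:ℝ) else 0) := by
    intro e
    by_cases hmem : u ∈ e.val
    · rw [if_pos hmem]
      unfold hamVec
      by_cases hex : ∃ i : Fin n, e.val = s(σ i, σ (nextF i))
      · rw [if_pos hex]
        obtain ⟨i, hi⟩ := hex
        have hmem' : u ∈ s(σ i, σ (nextF i)) := hi ▸ hmem
        rw [Sym2.mem_iff] at hmem'
        rcases hmem' with hui | hui
        · have : k = i := by rw [hk, hui]; simp
          subst this
          have : e = e2 := Subtype.ext (by rw [hi]; rfl)
          rw [if_pos this, if_neg (fun hc : e = e1 => he12 (hc ▸ this.symm).symm), zero_add]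
        · have hki : k = nextF i := by rw [hk, hui]; simp
          have : i = prevF k := by rw [hki, prevF_nextF]
          subst this
          have : e = e1 := Subtype.ext (by rw [hi, edg_val, nextF_prevF])
          rw [if_pos this]
          rw [if_neg (fun hc : e = e2 => he12 ((this.symm.trans hc))), add_zero]
      · rw [if_neg hex]
        have hne1 : e ≠ e1 := by
          intro hc; apply hex
          exact ⟨prevF k, by rw [hc, he1, edg_val, nextF_prevF]⟩
        have hne2 : e ≠ e2 := by
          intro hc; apply hex
          exact ⟨k, by rw [hc, he2, edg_val]⟩
        rw [if_neg hne1, if_neg hne2, add_zero]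
    · rw [if_neg hmem]
      have hne1 : e ≠ e1 := by
        intro hc
        apply hmem
        rw [hc, he1, mem_edg]
        exact Or.inr hu
      have hne2 : e ≠ e2 := by
        intro hc
        apply hmem
        rw [hc, he2, mem_edg]
        exact Or.inl hu
      rw [if_neg hne1, if_neg hne2, add_zero]
  unfold degree
  rw [Finset.sum_congr rfl (fun e _ => key e), Finset.sum_add_distrib,
    Finset.sum_ite_eq' Finset.univ e1 (fun _ => (1:ℝ)),
    Finset.sum_ite_eq' Finset.univ e2 (fun _ => (1:ℝ))]
  simp only [Finset.mem_univ, if_true]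
  norm_num

lemma hamVec_eulerian (hn : 3 ≤ n) (σ : Equiv.Perm (Fin n)) : IsEulerian (hamVec σ) :=
  ⟨natlike_hamVec σ, hamVec_connected (by omega) σ,
    fun u => ⟨1, Nat.one_pos, by rw [degree_hamVec hn σ u]; norm_num⟩⟩

lemma hamVec_mem_stsp (σ : Equiv.Perm (Fin n)) : hamVec σ ∈ stsp n :=
  subset_convexHull ℝ _ ⟨σ, rfl⟩

lemma stsp_sub_gtsp (hn : 3 ≤ n) : stsp n ⊆ gtsp n := by
  apply convexHull_min _ (convex_convexHull ℝ _)
  rintro x ⟨σ, rfl⟩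
  exact subset_convexHull ℝ _ (hamVec_eulerian hn σ)

lemma eulerian_mem_gtsp {x : Edge n → ℝ} (hx : IsEulerian x) : x ∈ gtsp n :=
  subset_convexHull ℝ _ hx

lemma dot_delta_hamVec (hn : 3 ≤ n) (σ : Equiv.Perm (Fin n)) (u : Fin n) :
    dot (delta u) (hamVec σ) = 1 := by
  rw [dot_delta_half, degree_hamVec hn σ u]
  norm_num

lemma dot_delta_stsp (hn : 3 ≤ n) {x : Edge n → ℝ} (hx : x ∈ stsp n) (u : Fin n) :
    dot (delta u) x = 1 := by
  have hc : Convex ℝ {y : Edge n → ℝ | dot (delta u) y = 1} :=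
    convex_hyperplane (dotL (delta u)).isLinear 1
  have := convexHull_min (fun y hy => ?_) hc hx
  · exact this
  · obtain ⟨σ, rfl⟩ := hy
    exact dot_delta_hamVec hn σ u

/-! ### degree lemmas -/

lemma degree_from_dot (x : Edge n → ℝ) (u : Fin n) : degree x u = 2 * dot (delta u) x := by
  rw [dot_delta_half]; ring

lemma degree_add (x y : Edge n → ℝ) (u : Fin n) :
    degree (x + y) u = degree x u + degree y u := by
  unfold degree
  rw [← Finset.sum_add_distrib]
  apply Finset.sum_congr rfl; intro e _
  by_cases h : u ∈ e.val <;> simp [h]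

lemma degree_sub (x y : Edge n → ℝ) (u : Fin n) :
    degree (x - y) u = degree x u - degree y u := by
  unfold degree
  rw [← Finset.sum_sub_distrib]
  apply Finset.sum_congr rfl; intro e _
  by_cases h : u ∈ e.val <;> simp [h]

lemma degree_indic {p q : Fin n} (hpq : p ≠ q) (s : Fin n) :
    degree (indic p q) s = if s = p ∨ s = q then 1 else 0 := by
  rw [degree_from_dot, dot_delta_indic s hpq]
  by_cases h : s = p ∨ s = q <;> simp [h]

/-! ### detour edge distinctness -/

lemma rt_euv_ne_euw {u v w : Fin n} (h : RootedTri u v w) : edg h.2.1 ≠ edg h.2.2 := by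
  intro hc0
  rw [edg_eq_iff] at hc0
  rcases hc0 with ⟨-, hc⟩ | ⟨hc, -⟩
  · exact h.1 hc
  · exact h.2.2 hc

lemma rt_euv_ne_evw {u v w : Fin n} (h : RootedTri u v w) : edg h.2.1 ≠ edg h.1 := by
  intro hc0
  rw [edg_eq_iff] at hc0
  rcases hc0 with ⟨hc, -⟩ | ⟨hc, -⟩
  · exact h.2.1 hc
  · exact h.2.2 hc

lemma rt_euw_ne_evw {u v w : Fin n} (h : RootedTri u v w) : edg h.2.2 ≠ edg h.1 := by
  intro hc0
  rw [edg_eq_iff] at hc0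
  rcases hc0 with ⟨hc, -⟩ | ⟨hc, hc2⟩
  · exact h.2.1 hc
  · exact h.2.2 hc

/-! ### dot computations for surgeries -/

lemma dot_detour (c : Edge n → ℝ) {u v w : Fin n} (h : RootedTri u v w) (x : Edge n → ℝ) :
    dot c (x + indic u v + indic u w - indic v w) = dot c x + tri c u v w := by
  rw [dot_sub, dot_add, dot_add, dot_indic c h.2.1, dot_indic c h.2.2, dot_indic c h.1]
  unfold tri
  rw [ev_symm c v u, ev_ne c h.2.1, ev_ne c h.2.2, ev_ne c h.1]
  ring

lemma dot_double (c : Edge n → ℝ) {u v : Fin n} (h : u ≠ v) (x : Edge n → ℝ) :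
    dot c (x + indic u v + indic u v) = dot c x + 2 * ev c u v := by
  rw [dot_add, dot_add, dot_indic c h, ev_ne c h]
  ring

lemma sum_xi_detour (ξ : Fin n → ℝ) {u v w : Fin n} (h : RootedTri u v w) (x : Edge n → ℝ) :
    ∑ s, ξ s * dot (delta s) (x + indic u v + indic u w - indic v w)
      = (∑ s, ξ s * dot (delta s) x) + ξ u := by
  have key : ∀ s, ξ s * dot (delta s) (x + indic u v + indic u w - indic v w)
      = ξ s * dot (delta s) x + (if s = u then ξ u else 0) := by
    intro s
    rw [dot_sub, dot_add, dot_add, dot_delta_indic s h.2.1, dot_delta_indic s h.2.2,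
      dot_delta_indic s h.1]
    by_cases hsu : s = u
    · subst hsu
      rw [if_pos (Or.inl rfl), if_pos (Or.inl rfl),
        if_neg (by rintro (hc | hc); exacts [h.2.1 hc, h.2.2 hc]), if_pos rfl]
      ring
    · rw [if_neg hsu]
      by_cases hsv : s = v
      · subst hsv
        rw [if_pos (Or.inr rfl), if_neg (by rintro (hc | hc); exacts [hsu hc, h.1 hc]),
          if_pos (Or.inl rfl)]
        ring
      · by_cases hsw : s = w
        · subst hsw
          rw [if_neg (by rintro (hc | hc); exacts [hsu hc, hsv hc]), if_pos (Or.inr rfl),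
            if_pos (Or.inr rfl)]
          ring
        · rw [if_neg (by rintro (hc | hc); exacts [hsu hc, hsv hc]),
            if_neg (by rintro (hc | hc); exacts [hsu hc, hsw hc]),
            if_neg (by rintro (hc | hc); exacts [hsv hc, hsw hc])]
          ring
  rw [Finset.sum_congr rfl (fun s _ => key s), Finset.sum_add_distrib,
    Finset.sum_ite_eq' Finset.univ u (fun _ => ξ u), if_pos (Finset.mem_univ u)]

lemma sum_xi_double (ξ : Fin n → ℝ) {u v : Fin n} (h : u ≠ v) (x : Edge n → ℝ) :
    ∑ s, ξ s * dot (delta s) (x + indic u v + indic u v)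
      = (∑ s, ξ s * dot (delta s) x) + (ξ u + ξ v) := by
  have key : ∀ s, ξ s * dot (delta s) (x + indic u v + indic u v)
      = ξ s * dot (delta s) x + ((if s = u then ξ u else 0) + (if s = v then ξ v else 0)) := by
    intro s
    rw [dot_add, dot_add, dot_delta_indic s h]
    by_cases hsu : s = u
    · subst hsu
      rw [if_pos (Or.inl rfl), if_pos rfl, if_neg h]
      ring
    · by_cases hsv : s = v
      · subst hsv
        rw [if_pos (Or.inr rfl), if_neg hsu, if_pos rfl]
        ring
      · rw [if_neg (by rintro (hc | hc); exacts [hsu hc, hsv hc]), if_neg hsu, if_neg hsv]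
        ring
  rw [Finset.sum_congr rfl (fun s _ => key s), Finset.sum_add_distrib, Finset.sum_add_distrib,
    Finset.sum_ite_eq' Finset.univ u (fun _ => ξ u), if_pos (Finset.mem_univ u),
    Finset.sum_ite_eq' Finset.univ v (fun _ => ξ v), if_pos (Finset.mem_univ v)]

/-! ### the detour surgery -/

lemma detour_apply {x : Edge n → ℝ} {u v w : Fin n} (h : RootedTri u v w) (e : Edge n) :
    (x + indic u v + indic u w - indic v w) e =
      x e + (if e = edg h.2.1 then 1 else 0) + (if e = edg h.2.2 then 1 else 0)
        - (if e = edg h.1 then 1 else 0) := by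
  simp only [Pi.add_apply, Pi.sub_apply, indic_apply h.2.1, indic_apply h.2.2, indic_apply h.1]

lemma eulerian_detour {x : Edge n → ℝ} (hx : IsEulerian x) {u v w : Fin n}
    (h : RootedTri u v w) (hvw : 1 ≤ x (edg h.1)) :
    IsEulerian (x + indic u v + indic u w - indic v w) := by
  obtain ⟨hint, hconn, hdeg⟩ := hx
  set y := x + indic u v + indic u w - indic v w with hy
  have hyval : ∀ e : Edge n, y e = x e + (if e = edg h.2.1 then 1 else 0)
      + (if e = edg h.2.2 then 1 else 0) - (if e = edg h.1 then 1 else 0) :=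
    detour_apply h
  refine ⟨?_, ?_, ?_⟩
  · -- integrality
    intro e
    obtain ⟨m, hm⟩ := hint e
    by_cases h1 : e = edg h.2.1
    · refine ⟨m + 1, ?_⟩
      rw [hyval e, if_pos h1, if_neg (h1 ▸ rt_euv_ne_euw h), if_neg (h1 ▸ rt_euv_ne_evw h), hm]
      push_cast; ring
    · by_cases h2 : e = edg h.2.2
      · refine ⟨m + 1, ?_⟩
        rw [hyval e, if_neg h1, if_pos h2, if_neg (h2 ▸ rt_euw_ne_evw h), hm]
        push_cast; ring
      · by_cases h3 : e = edg h.1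
        · subst h3
          have hm1 : 1 ≤ m := by
            rw [hm] at hvw; exact_mod_cast hvw
          refine ⟨m - 1, ?_⟩
          rw [hyval _, if_neg h1, if_neg h2, if_pos rfl, hm]
          push_cast [hm1]; ring
        · refine ⟨m, ?_⟩
          rw [hyval e, if_neg h1, if_neg h2, if_neg h3, hm]
          ring
  · -- connectivity
    have hadj : ∀ p q, (supportGraph x).Adj p q → (supportGraph y).Reachable p q := by
      intro p q hpq
      obtain ⟨hne, hev⟩ := hpq
      have hx_nonneg := hint
      by_cases hcase : edg hne = edg h.1
      · -- p,q is the edge vw (possibly flipped)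
        rw [edg_eq_iff] at hcase
        have hadj_vu : (supportGraph y).Adj v u := by
          refine ⟨h.2.1.symm, ?_⟩
          rw [ev_symm, ev_ne _ h.2.1, hyval _, if_pos rfl, if_neg (rt_euv_ne_euw h),
            if_neg (rt_euv_ne_evw h)]
          have := (NatLike.nonneg hint (edg h.2.1))
          linarith
        have hadj_uw : (supportGraph y).Adj u w := by
          refine ⟨h.2.2, ?_⟩
          rw [ev_ne _ h.2.2, hyval _, if_neg (rt_euv_ne_euw h).symm, if_pos rfl,
            if_neg (rt_euw_ne_evw h)]
          have := (NatLike.nonneg hint (edg h.2.2))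
          linarith
        have hreach : (supportGraph y).Reachable v w :=
          (hadj_vu.reachable).trans hadj_uw.reachable
        rcases hcase with ⟨rfl, rfl⟩ | ⟨rfl, rfl⟩
        · exact hreach
        · exact hreach.symm
      · -- edge survives
        refine SimpleGraph.Adj.reachable ⟨hne, ?_⟩
        rw [ev_ne _ hne] at hev ⊢
        rw [hyval _]
        have h1 : (if edg hne = edg h.2.1 then (1:ℝ) else 0) ≥ 0 := by positivity
        have h2 : (if edg hne = edg h.2.2 then (1:ℝ) else 0) ≥ 0 := by positivity
        rw [if_neg hcase]
        linarith
    haveI hne := hconn.nonempty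
    exact SimpleGraph.Connected.mk (fun p q => reach_mono hadj (hconn.preconnected p q))
  · -- degrees
    intro s
    obtain ⟨m, hm, hdm⟩ := hdeg s
    have hdegy : degree y s = degree x s + degree (indic u v) s + degree (indic u w) s
        - degree (indic v w) s := by
      rw [hy, degree_sub, degree_add, degree_add]
    by_cases hsu : s = u
    · subst hsu
      refine ⟨m + 1, by omega, ?_⟩
      rw [hdegy, degree_indic h.2.1, degree_indic h.2.2, degree_indic h.1,
        if_pos (Or.inl rfl), if_pos (Or.inl rfl),
        if_neg (by rintro (hc | hc); exacts [h.2.1 hc, h.2.2 hc]), hdm]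
      push_cast; ring
    · refine ⟨m, hm, ?_⟩
      rw [hdegy, degree_indic h.2.1, degree_indic h.2.2, degree_indic h.1, hdm]
      by_cases hsv : s = v
      · subst hsv
        rw [if_pos (Or.inr rfl), if_neg (by rintro (hc | hc); exacts [hsu hc, h.1 hc]),
          if_pos (Or.inl rfl)]
        ring
      · by_cases hsw : s = w
        · subst hsw
          rw [if_neg (by rintro (hc | hc); exacts [hsu hc, hsv hc]), if_pos (Or.inr rfl),
            if_pos (Or.inr rfl)]
          ring
        · rw [if_neg (by rintro (hc | hc); exacts [hsu hc, hsv hc]),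
            if_neg (by rintro (hc | hc); exacts [hsu hc, hsw hc]),
            if_neg (by rintro (hc | hc); exacts [hsv hc, hsw hc])]
          ring

/-! ### punctured graph and the parity (second neighbour) lemma -/

def punct (x : Edge n → ℝ) (u : Fin n) : Edge n → ℝ := fun e => if u ∈ e.val then 0 else x e

lemma punct_isolated (x : Edge n → ℝ) (u q : Fin n) :
    ¬ (supportGraph (punct x u)).Adj q u := by
  rintro ⟨hne, hev⟩
  rw [ev_ne _ hne] at hev
  have : punct x u (edg hne) = 0 := by
    unfold punct
    rw [if_pos (by rw [mem_edg]; exact Or.inr rfl)]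
  rw [this] at hev
  exact lt_irrefl 0 hev

lemma punct_unreach (x : Edge n → ℝ) {u q : Fin n} (hq : q ≠ u) :
    ¬ (supportGraph (punct x u)).Reachable q u := by
  intro hr
  have hcl : ∀ p r : Fin n, p ∈ {s : Fin n | s ≠ u} → (supportGraph (punct x u)).Adj p r →
      r ∈ {s : Fin n | s ≠ u} := by
    intro p r _ hadj hru
    exact punct_isolated x u p (hru ▸ hadj)
  exact (closed_reach hcl hr hq) rfl

lemma punct_adj_of_adj {x : Edge n → ℝ} {u p q : Fin n} (h : (supportGraph x).Adj p q)
    (hp : p ≠ u) (hq : q ≠ u) : (supportGraph (punct x u)).Adj p q := by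
  obtain ⟨hne, hev⟩ := h
  refine ⟨hne, ?_⟩
  rw [ev_ne _ hne] at hev ⊢
  unfold punct
  rw [if_neg (by rw [mem_edg]; rintro (rfl | rfl); exacts [hp rfl, hq rfl])]
  exact hev

lemma second_neighbor {x : Edge n → ℝ} (hint : NatLike x)
    (hdeg : ∀ s, ∃ m : ℕ, degree x s = 2 * m)
    {u v : Fin n} (hadj : (supportGraph x).Adj u v) (hev1 : ev x u v = 1) :
    ∃ w, (supportGraph x).Adj u w ∧ w ≠ v ∧
      (supportGraph (punct x u)).Reachable v w := by
  classical
  obtain ⟨huv, -⟩ := hadj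
  set H := supportGraph (punct x u) with hH
  set C : Finset (Fin n) := Finset.univ.filter (fun p => H.Reachable v p) with hC
  have hvC : v ∈ C := by
    rw [hC, Finset.mem_filter]; exact ⟨Finset.mem_univ v, SimpleGraph.Reachable.refl v⟩
  have huC : u ∉ C := by
    rw [hC, Finset.mem_filter]
    rintro ⟨-, hr⟩
    exact punct_unreach x (Ne.symm huv) hr
  have hclosed : ∀ p q, p ∈ C → H.Adj p q → q ∈ C := by
    intro p q hp hpq
    rw [hC, Finset.mem_filter] at hp ⊢
    exact ⟨Finset.mem_univ q, hp.2.trans hpq.reachable⟩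
  set ne' : Edge n → ℕ := fun e => ⌊x e⌋₊ with hne'
  have hne_cast : ∀ e, ((ne' e : ℕ) : ℝ) = x e := fun e => hint.floor_eq e
  set ce : Edge n → ℕ := fun e => (C.filter (· ∈ e.val)).card with hce
  -- each vertex degree is even as a natural number
  set degN : Fin n → ℕ := fun p => ∑ e, if p ∈ e.val then ne' e else 0 with hdegN
  have hdegN_even : ∀ p, Even (degN p) := by
    intro p
    obtain ⟨m, hm⟩ := hdeg p
    have hcast : ((degN p : ℕ) : ℝ) = degree x p := by
      simp only [hdegN]
      push_cast
      unfold degree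
      apply Finset.sum_congr rfl; intro e _
      by_cases h : p ∈ e.val <;> simp [h, hne_cast e]
    have : ((degN p : ℕ) : ℝ) = ((2 * m : ℕ) : ℝ) := by
      rw [hcast, hm]; push_cast; ring
    have h2 := @Nat.cast_injective ℝ _ _ _ _ this
    exact ⟨m, by omega⟩
  -- the double-counting identity
  have keyeq : ∑ p ∈ C, degN p = ∑ e, ne' e * ce e := by
    simp only [hdegN]
    rw [Finset.sum_comm]
    apply Finset.sum_congr rfl; intro e _
    simp only [hce]
    calc ∑ p ∈ C, (if p ∈ e.val then ne' e else 0)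
        = ∑ p ∈ C.filter (· ∈ e.val), ne' e := (Finset.sum_filter _ _).symm
      _ = (C.filter (· ∈ e.val)).card * ne' e := by rw [Finset.sum_const, smul_eq_mul]
      _ = ne' e * (C.filter (· ∈ e.val)).card := mul_comm _ _
  have hce_le : ∀ e : Edge n, ce e ≤ 2 := by
    intro e
    obtain ⟨p, q, hpq, rfl⟩ := edge_cases e
    simp only [hce]
    have : C.filter (· ∈ (edg hpq).val) ⊆ {p, q} := by
      intro r hr
      rw [Finset.mem_filter, mem_edg] at hr
      rw [Finset.mem_insert, Finset.mem_singleton]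
      exact hr.2
    have h2 : ({p, q} : Finset (Fin n)).card ≤ 2 :=
      (Finset.card_insert_le _ _).trans (by simp)
    exact (Finset.card_le_card this).trans h2
  -- F1 : edges with exactly one endpoint in C
  set F1 : Finset (Edge n) := Finset.univ.filter (fun e => ce e = 1) with hF1
  have hparity : Even (∑ e ∈ F1, ne' e) := by
    have h0 : ((∑ p ∈ C, degN p : ℕ) : ZMod 2) = 0 := by
      rw [Nat.cast_sum]
      apply Finset.sum_eq_zero
      intro p hp
      obtain ⟨m, hm⟩ := hdegN_even p
      rw [hm]
      push_cast
      ring_nf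
      rw [show ((2:ZMod 2)) = 0 from rfl]
      ring
    rw [keyeq] at h0
    have h1 : ((∑ e ∈ F1, ne' e : ℕ) : ZMod 2) = 0 := by
      rw [← h0, Nat.cast_sum, Nat.cast_sum, hF1]
      rw [Finset.sum_filter]
      apply Finset.sum_congr rfl
      intro e _
      have := hce_le e
      rcases (by omega : ce e = 0 ∨ ce e = 1 ∨ ce e = 2) with h | h | h
      · rw [h, if_neg (by omega)]
        push_cast [h]
        ring
      · rw [h, if_pos rfl]
        push_cast [h]
        ring
      · rw [h, if_neg (by omega)]
        push_cast [h]
        rw [show ((2:ZMod 2)) = 0 from rfl]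
        ring
    rw [ZMod.natCast_eq_zero_iff] at h1
    obtain ⟨k, hk⟩ := h1
    exact ⟨k, by omega⟩
  -- the edge uv lies in F1 with weight 1
  set euv : Edge n := edg huv with heuv
  have heuv_F1 : euv ∈ F1 := by
    rw [hF1, Finset.mem_filter]
    refine ⟨Finset.mem_univ _, ?_⟩
    simp only [hce]
    have : C.filter (· ∈ euv.val) = {v} := by
      apply Finset.ext
      intro r
      rw [Finset.mem_filter, Finset.mem_singleton, heuv, mem_edg]
      constructor
      · rintro ⟨hrC, rfl | rfl⟩
        · exact absurd hrC huC
        · rfl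
      · rintro rfl
        exact ⟨hvC, Or.inr rfl⟩
    rw [this, Finset.card_singleton]
  have heuv_ne : ne' euv = 1 := by
    simp only [hne']
    have h3 : x euv = 1 := by rw [heuv, ← ev_ne x huv, hev1]
    rw [h3, Nat.floor_one]
  -- extract a second edge of F1 with positive weight
  have hsum_split : ∑ e ∈ F1, ne' e = ne' euv + ∑ e ∈ F1.erase euv, ne' e :=
    (Finset.add_sum_erase F1 ne' heuv_F1).symm
  have hR : ∑ e ∈ F1.erase euv, ne' e ≠ 0 := by
    intro h0
    rw [hsum_split, h0, heuv_ne] at hparity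
    norm_num at hparity
  obtain ⟨e, heF, hene⟩ := Finset.exists_ne_zero_of_sum_ne_zero hR
  have he_erase := heF
  rw [Finset.mem_erase] at heF
  obtain ⟨he_ne_euv, heF1⟩ := heF
  rw [hF1, Finset.mem_filter] at heF1
  have hce1 : ce e = 1 := heF1.2
  have hxe_pos : 0 < x e := by
    have h1 : 1 ≤ ne' e := Nat.one_le_iff_ne_zero.mpr hene
    have := hne_cast e
    have : (1:ℝ) ≤ x e := by
      rw [← this]; exact_mod_cast h1
    linarith
  -- e must contain u
  obtain ⟨p, q, hpq, rfl⟩ := edge_cases e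
  have hmemu : u = p ∨ u = q := by
    by_contra hcon
    push_neg at hcon
    obtain ⟨hup, huq⟩ := hcon
    have hadjpq : H.Adj p q := by
      refine punct_adj_of_adj ⟨hpq, ?_⟩ (Ne.symm hup) (Ne.symm huq) 
      rw [ev_ne _ hpq]
      exact hxe_pos
    have hiff : (p ∈ C ↔ q ∈ C) :=
      ⟨fun hp => hclosed p q hp hadjpq, fun hq => hclosed q p hq hadjpq.symm⟩
    have : C.filter (· ∈ (edg hpq).val) = ∅ ∨ C.filter (· ∈ (edg hpq).val) = {p, q} := by
      by_cases hp : p ∈ C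
      · right
        apply Finset.ext
        intro r
        rw [Finset.mem_filter, mem_edg, Finset.mem_insert, Finset.mem_singleton]
        constructor
        · rintro ⟨-, h⟩; exact h
        · rintro (rfl | rfl)
          exacts [⟨hp, Or.inl rfl⟩, ⟨hiff.mp hp, Or.inr rfl⟩]
      · left
        apply Finset.eq_empty_of_forall_notMem
        intro r hr
        rw [Finset.mem_filter, mem_edg] at hr
        rcases hr.2 with rfl | rfl
        · exact hp hr.1
        · exact hp (hiff.mpr hr.1)
    rcases this with h | h
    · simp only [hce, h] at hce1; simp at hce1
    · simp only [hce, h] at hce1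
      rw [Finset.card_insert_of_notMem (by simpa using hpq), Finset.card_singleton] at hce1
      omega
  -- identify the other endpoint
  have main : ∀ (t : Fin n) (hut : u ≠ t), edg hpq = edg hut → 
      ∃ w, (supportGraph x).Adj u w ∧ w ≠ v ∧ H.Reachable v w := by
    intro t hut hedge
    have htC : t ∈ C := by
      have hfil : C.filter (· ∈ (edg hpq).val) = {t} := by
        have hcard := hce1
        simp only [hce] at hcard
        obtain ⟨r, hr⟩ := Finset.card_eq_one.mp hcard
        rw [hr]
        have hrmem : r ∈ C.filter (· ∈ (edg hpq).val) := by rw [hr]; exact Finset.mem_singleton_self r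
        rw [Finset.mem_filter, hedge, mem_edg] at hrmem
        rcases hrmem.2 with rfl | rfl
        · exact absurd hrmem.1 huC
        · rfl
      have : t ∈ C.filter (· ∈ (edg hpq).val) := by
        rw [hfil]; exact Finset.mem_singleton_self t
      exact (Finset.mem_filter.mp this).1
    refine ⟨t, ⟨hut, ?_⟩, ?_, ?_⟩
    · rw [ev_ne _ hut, ← hedge]; exact hxe_pos
    · intro hc
      subst hc
      apply he_ne_euv
      rw [hedge, heuv]
    · rw [hC, Finset.mem_filter] at htC
      exact htC.2
  rcases hmemu with rfl | rfl
  · exact main q hpq rfl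
  · exact main p (Ne.symm hpq) (Subtype.ext Sym2.eq_swap)

/-! ### shortcut surgeries -/

lemma degree_ge_single {x : Edge n → ℝ} (hint : NatLike x) {p q : Fin n} (hpq : p ≠ q) :
    ev x p q ≤ degree x p := by
  rw [degree_eq_sum_ev]
  have hq : q ∈ Finset.univ.erase p := Finset.mem_erase.mpr ⟨hpq.symm, Finset.mem_univ q⟩
  exact Finset.single_le_sum (fun v _ => ev_nonneg hint p v) hq

lemma shortcutA_core {x : Edge n → ℝ} (hx : IsEulerian x) {u v w : Fin n} (h : RootedTri u v w)
    (hv : 0 < ev x u v) (hw : 0 < ev x u w) (hdeg : 4 ≤ degree x u)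
    (hconn : (supportGraph (x - indic u v - indic u w + indic v w)).Connected) :
    ∃ x', IsEulerian x' ∧ sz x' < sz x ∧ x = x' + indic u v + indic u w - indic v w := by
  obtain ⟨hint, hxconn, hxdeg⟩ := hx
  set x' : Edge n → ℝ := x - indic u v - indic u w + indic v w with hx'
  have heq : x = x' + indic u v + indic u w - indic v w := by
    funext e
    simp only [hx', Pi.add_apply, Pi.sub_apply]
    ring
  have hx'val : ∀ e : Edge n, x' e = x e - (if e = edg h.2.1 then 1 else 0)
      - (if e = edg h.2.2 then 1 else 0) + (if e = edg h.1 then 1 else 0) := by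
    intro e
    simp only [hx', Pi.add_apply, Pi.sub_apply, indic_apply h.2.1, indic_apply h.2.2,
      indic_apply h.1]
  rw [ev_ne x h.2.1] at hv
  rw [ev_ne x h.2.2] at hw
  have hvx : 1 ≤ x (edg h.2.1) := NatLike.one_le hint hv
  have hwx : 1 ≤ x (edg h.2.2) := NatLike.one_le hint hw
  have hint' : NatLike x' := by
    intro e
    by_cases h1 : e = edg h.2.1
    · subst h1
      obtain ⟨m, hm⟩ := hint (edg h.2.1)
      have hm1 : 1 ≤ m := by rw [hm] at hvx; exact_mod_cast hvx
      refine ⟨m - 1, ?_⟩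
      rw [hx'val _, if_pos rfl, if_neg (rt_euv_ne_euw h), if_neg (rt_euv_ne_evw h), hm]
      push_cast [hm1]; ring
    · by_cases h2 : e = edg h.2.2
      · subst h2
        obtain ⟨m, hm⟩ := hint (edg h.2.2)
        have hm1 : 1 ≤ m := by rw [hm] at hwx; exact_mod_cast hwx
        refine ⟨m - 1, ?_⟩
        rw [hx'val _, if_neg (rt_euv_ne_euw h).symm, if_pos rfl, if_neg (rt_euw_ne_evw h), hm]
        push_cast [hm1]; ring
      · by_cases h3 : e = edg h.1
        · subst h3
          obtain ⟨m, hm⟩ := hint (edg h.1)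
          refine ⟨m + 1, ?_⟩
          rw [hx'val _, if_neg h1, if_neg h2, if_pos rfl, hm]
          push_cast; ring
        · obtain ⟨m, hm⟩ := hint e
          refine ⟨m, ?_⟩
          rw [hx'val _, if_neg h1, if_neg h2, if_neg h3, hm]
          ring
  refine ⟨x', ⟨hint', hconn, ?_⟩, ?_, heq⟩
  · -- degrees
    intro s
    have hdegx' : degree x' s = degree x s - degree (indic u v) s - degree (indic u w) s
        + degree (indic v w) s := by
      rw [hx', degree_add, degree_sub, degree_sub]
    by_cases hsu : s = u
    · subst hsu
      obtain ⟨m, hm, hdm⟩ := hxdeg s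
      have hm2 : 2 ≤ m := by
        by_contra hcon
        have : m = 1 := by omega
        rw [this] at hdm
        rw [hdm] at hdeg
        norm_num at hdeg
      refine ⟨m - 1, by omega, ?_⟩
      rw [hdegx', degree_indic h.2.1, degree_indic h.2.2, degree_indic h.1,
        if_pos (Or.inl rfl), if_pos (Or.inl rfl),
        if_neg (by rintro (hc | hc); exacts [h.2.1 hc, h.2.2 hc]), hdm]
      push_cast [show 1 ≤ m by omega]; ring
    · obtain ⟨m, hm, hdm⟩ := hxdeg s
      refine ⟨m, hm, ?_⟩
      rw [hdegx', degree_indic h.2.1, degree_indic h.2.2, degree_indic h.1, hdm]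
      by_cases hsv : s = v
      · subst hsv
        rw [if_pos (Or.inr rfl), if_neg (by rintro (hc | hc); exacts [hsu hc, h.1 hc]),
          if_pos (Or.inl rfl)]
        ring
      · by_cases hsw : s = w
        · subst hsw
          rw [if_neg (by rintro (hc | hc); exacts [hsu hc, hsv hc]), if_pos (Or.inr rfl),
            if_pos (Or.inr rfl)]
          ring
        · rw [if_neg (by rintro (hc | hc); exacts [hsu hc, hsv hc]),
            if_neg (by rintro (hc | hc); exacts [hsu hc, hsw hc]),
            if_neg (by rintro (hc | hc); exacts [hsv hc, hsw hc])]
          ring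
  · -- size decreases
    have heq2 : x + indic v w = x' + indic u v + indic u w := by
      funext e
      simp only [hx', Pi.add_apply, Pi.sub_apply]
      ring
    have h1 : sz (x + indic v w) = sz x + 1 := sz_add_indic hint h.1
    have h2 : sz (x' + indic u v + indic u w) = sz x' + 1 + 1 := by
      rw [sz_add_indic (hint'.add_indic h.2.1) h.2.2, sz_add_indic hint' h.2.1]
    rw [heq2, h2] at h1
    omega

lemma shortcutB_core {x : Edge n → ℝ} (hx : IsEulerian x) {u v : Fin n} (huv : u ≠ v)
    (hv4 : 4 ≤ ev x u v) :
    ∃ x', IsEulerian x' ∧ sz x' < sz x ∧ x = x' + indic u v + indic u v := by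
  obtain ⟨hint, hxconn, hxdeg⟩ := hx
  set x' : Edge n → ℝ := x - indic u v - indic u v with hx'
  have heq : x = x' + indic u v + indic u v := by
    funext e
    simp only [hx', Pi.add_apply, Pi.sub_apply]
    ring
  have hx'val : ∀ e : Edge n, x' e = x e - (if e = edg huv then 2 else 0) := by
    intro e
    simp only [hx', Pi.sub_apply, indic_apply huv]
    by_cases h1 : e = edg huv
    · simp only [if_pos h1]; ring
    · simp [h1]
  have hvx : (4:ℝ) ≤ x (edg huv) := by rwa [ev_ne x huv] at hv4
  have hint' : NatLike x' := by
    intro e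
    by_cases h1 : e = edg huv
    · subst h1
      obtain ⟨m, hm⟩ := hint (edg huv)
      have hm1 : 4 ≤ m := by rw [hm] at hvx; exact_mod_cast hvx
      refine ⟨m - 2, ?_⟩
      rw [hx'val _, if_pos rfl, hm]
      push_cast [show 2 ≤ m by omega]; ring
    · obtain ⟨m, hm⟩ := hint e
      exact ⟨m, by rw [hx'val _, if_neg h1, hm]; ring⟩
  have hsupp : supportGraph x' = supportGraph x := by
    ext p q
    constructor
    · rintro ⟨hne, hev⟩
      refine ⟨hne, ?_⟩
      rw [ev_ne _ hne] at hev ⊢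
      rw [hx'val _] at hev
      by_cases h1 : edg hne = edg huv
      · rw [if_pos h1] at hev
        rw [h1]
        linarith
      · rwa [if_neg h1, sub_zero] at hev
    · rintro ⟨hne, hev⟩
      refine ⟨hne, ?_⟩
      rw [ev_ne _ hne] at hev ⊢
      rw [hx'val _]
      by_cases h1 : edg hne = edg huv
      · rw [if_pos h1, h1]
        linarith
      · rwa [if_neg h1, sub_zero]
  refine ⟨x', ⟨hint', by rwa [hsupp], ?_⟩, ?_, heq⟩
  · -- degrees
    intro s
    have hdegx' : degree x' s = degree x s - 2 * degree (indic u v) s := by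
      rw [hx', degree_sub, degree_sub]; ring
    by_cases hsu : s = u
    · subst hsu
      obtain ⟨m, hm, hdm⟩ := hxdeg s
      have hm2 : 2 ≤ m := by
        have h4 : (4:ℝ) ≤ degree x s := le_trans hv4 (degree_ge_single hint huv)
        rw [hdm] at h4
        by_contra hcon
        have : m = 1 := by omega
        rw [this] at h4; norm_num at h4
      refine ⟨m - 1, by omega, ?_⟩
      rw [hdegx', degree_indic huv, if_pos (Or.inl rfl), hdm]
      push_cast [show 1 ≤ m by omega]; ring
    · by_cases hsv : s = v
      · subst hsv
        obtain ⟨m, hm, hdm⟩ := hxdeg s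
        have hm2 : 2 ≤ m := by
          have h4 : (4:ℝ) ≤ degree x s := by
            have := degree_ge_single hint huv.symm
            rw [ev_symm] at this
            exact le_trans hv4 this
          rw [hdm] at h4
          by_contra hcon
          have : m = 1 := by omega
          rw [this] at h4; norm_num at h4
        refine ⟨m - 1, by omega, ?_⟩
        rw [hdegx', degree_indic huv, if_pos (Or.inr rfl), hdm]
        push_cast [show 1 ≤ m by omega]; ring
      · obtain ⟨m, hm, hdm⟩ := hxdeg s
        refine ⟨m, hm, ?_⟩
        rw [hdegx', degree_indic huv, if_neg (by rintro (hc | hc); exacts [hsu hc, hsv hc]), hdm]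
        ring
  · -- size
    have h2 : sz (x' + indic u v + indic u v) = sz x' + 1 + 1 := by
      rw [sz_add_indic (hint'.add_indic huv) huv, sz_add_indic hint' huv]
    rw [← heq] at h2
    omega

/-! ### the main shortcut lemma -/

lemma eulerian_shortcut {x : Edge n → ℝ} (hx : IsEulerian x) {u : Fin n}
    (hdeg4 : 4 ≤ degree x u) :
    ∃ x', IsEulerian x' ∧ sz x' < sz x ∧
      ((∃ v w, ∃ h : RootedTri u v w, x = x' + indic u v + indic u w - indic v w) ∨
       (∃ v, u ≠ v ∧ x = x' + indic u v + indic u v)) := by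
  classical
  obtain ⟨hint, hconn, hdeg⟩ := hx
  have hx' : IsEulerian x := ⟨hint, hconn, hdeg⟩
  set Nb : Finset (Fin n) := Finset.univ.filter (fun v => (supportGraph x).Adj u v) with hNb
  have hNb_mem : ∀ {v}, v ∈ Nb ↔ (supportGraph x).Adj u v := by
    intro v; rw [hNb, Finset.mem_filter]; simp
  have hNb_sub : Nb ⊆ Finset.univ.erase u := by
    intro v hv
    exact Finset.mem_erase.mpr ⟨((hNb_mem.mp hv).1).symm, Finset.mem_univ v⟩
  have hdeg_eq : degree x u = ∑ v ∈ Nb, ev x u v := by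
    rw [degree_eq_sum_ev]
    refine (Finset.sum_subset hNb_sub ?_).symm
    intro v hv hvnb
    have hvu : u ≠ v := fun hc => (Finset.mem_erase.mp hv).1 hc.symm
    have : ¬ (0 < ev x u v) := fun hc => hvnb (hNb_mem.mpr ⟨hvu, hc⟩)
    have h0 := ev_nonneg hint u v
    linarith
  have hNb_ne : Nb.Nonempty := by
    rcases Finset.eq_empty_or_nonempty Nb with h | h
    · rw [h, Finset.sum_empty] at hdeg_eq
      rw [hdeg_eq] at hdeg4
      norm_num at hdeg4
    · exact h
  by_cases hbig : ∃ v ∈ Nb, 2 ≤ ev x u v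
  · obtain ⟨v, hvNb, hv2⟩ := hbig
    have huv : u ≠ v := (hNb_mem.mp hvNb).1
    by_cases hother : ∃ w ∈ Nb, w ≠ v
    · -- C2 : multiplicity ≥ 2 on uv and another neighbour w
      obtain ⟨w, hwNb, hwv⟩ := hother
      have huw : u ≠ w := (hNb_mem.mp hwNb).1
      have h : RootedTri u v w := ⟨fun hc => hwv hc.symm, huv, huw⟩
      set y : Edge n → ℝ := x - indic u v - indic u w + indic v w with hy
      have hyval : ∀ e : Edge n, y e = x e - (if e = edg h.2.1 then 1 else 0)
          - (if e = edg h.2.2 then 1 else 0) + (if e = edg h.1 then 1 else 0) := by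
        intro e
        simp only [hy, Pi.add_apply, Pi.sub_apply, indic_apply h.2.1, indic_apply h.2.2,
          indic_apply h.1]
      have hx_uv : (2:ℝ) ≤ x (edg h.2.1) := by rwa [ev_ne x h.2.1] at hv2
      have hadjy_uv : (supportGraph y).Adj u v := by
        refine ⟨huv, ?_⟩
        rw [ev_ne _ h.2.1, hyval _, if_pos rfl, if_neg (rt_euv_ne_euw h),
          if_neg (rt_euv_ne_evw h)]
        linarith
      have hadjy_vw : (supportGraph y).Adj v w := by
        refine ⟨h.1, ?_⟩
        rw [ev_ne _ h.1, hyval _, if_neg (rt_euv_ne_evw h).symm, if_neg (rt_euw_ne_evw h).symm,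
          if_pos rfl]
        have := NatLike.nonneg hint (edg h.1)
        linarith
      have htrans : ∀ p q, (supportGraph x).Adj p q → (supportGraph y).Reachable p q := by
        intro p q hpq
        obtain ⟨hne, hev⟩ := hpq
        rw [ev_ne _ hne] at hev
        by_cases hcase : edg hne = edg h.2.2
        · have hreach : (supportGraph y).Reachable u w :=
            (hadjy_uv.reachable).trans hadjy_vw.reachable
          rw [edg_eq_iff hne h.2.2] at hcase
          rcases hcase with ⟨rfl, rfl⟩ | ⟨rfl, rfl⟩
          · exact hreach
          · exact hreach.symm
        · refine SimpleGraph.Adj.reachable ⟨hne, ?_⟩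
          rw [ev_ne _ hne, hyval _, if_neg hcase]
          have h2 : (0:ℝ) ≤ (if edg hne = edg h.1 then 1 else 0) := by positivity
          by_cases h1 : edg hne = edg h.2.1
          · have h4 : (2:ℝ) ≤ x (edg hne) := by rw [h1]; exact hx_uv
            rw [if_pos h1]
            linarith
          · rw [if_neg h1]
            linarith
      have hconny : (supportGraph y).Connected := by
        haveI := hconn.nonempty
        exact SimpleGraph.Connected.mk (fun p q => reach_mono htrans (hconn.preconnected p q))
      obtain ⟨x', h1, h2, h3⟩ := shortcutA_core hx' h (hNb_mem.mp hvNb).2 (hNb_mem.mp hwNb).2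
        hdeg4 hconny
      exact ⟨x', h1, h2, Or.inl ⟨v, w, h, h3⟩⟩
    · -- C1 : single neighbour with big multiplicity
      push_neg at hother
      have hNbv : Nb = {v} := by
        apply Finset.eq_singleton_iff_unique_mem.mpr
        exact ⟨hvNb, fun w hw => hother w hw⟩
      have hv4 : 4 ≤ ev x u v := by
        rw [hNbv, Finset.sum_singleton] at hdeg_eq
        rw [← hdeg_eq]
        exact hdeg4
      obtain ⟨x', h1, h2, h3⟩ := shortcutB_core hx' huv hv4
      exact ⟨x', h1, h2, Or.inr ⟨v, huv, h3⟩⟩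
  · -- C3 : all multiplicities equal to 1
    push_neg at hbig
    have hall : ∀ v ∈ Nb, ev x u v = 1 := by
      intro v hv
      have hvu := (hNb_mem.mp hv).1
      have h1 : 0 < ev x u v := (hNb_mem.mp hv).2
      have h2 := hbig v hv
      rw [ev_ne x hvu] at h1 h2 ⊢
      obtain ⟨m, hm⟩ := hint (edg hvu)
      rw [hm] at h1 h2 ⊢
      have hm1 : 0 < m := by exact_mod_cast h1
      have hm2 : (m:ℝ) < 2 := h2
      have hm3 : m < 2 := by exact_mod_cast hm2
      have : m = 1 := by omega
      rw [this]; norm_num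
    have hdeg_card : 4 ≤ Nb.card := by
      have hcc : degree x u = Nb.card := by
        rw [hdeg_eq, Finset.sum_congr rfl hall, Finset.sum_const, nsmul_eq_mul, mul_one]
      rw [hcc] at hdeg4
      exact_mod_cast hdeg4
    obtain ⟨v, hvNb⟩ := hNb_ne
    have huv : u ≠ v := (hNb_mem.mp hvNb).1
    have hdeg' : ∀ s, ∃ m : ℕ, degree x s = 2 * m := fun s => (hdeg s).imp (fun m hm => hm.2)
    set H := supportGraph (punct x u) with hH
    have SN : ∀ q ∈ Nb, ∃ q2 ∈ Nb, q2 ≠ q ∧ H.Reachable q q2 := by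
      intro q hq
      obtain ⟨q2, hadj, hne, hreach⟩ := second_neighbor hint hdeg' (hNb_mem.mp hq)
        (hall q hq)
      exact ⟨q2, hNb_mem.mpr hadj, hne, hreach⟩
    -- generic facts about the shortcut vector for a pair of neighbours
    have hyval_gen : ∀ (v' w' : Fin n) (h : RootedTri u v' w') (e : Edge n),
        (x - indic u v' - indic u w' + indic v' w') e
          = x e - (if e = edg h.2.1 then 1 else 0) - (if e = edg h.2.2 then 1 else 0)
            + (if e = edg h.1 then 1 else 0) := by
      intro v' w' h e
      simp only [Pi.add_apply, Pi.sub_apply, indic_apply h.2.1, indic_apply h.2.2,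
        indic_apply h.1]
    have hsurv_gen : ∀ (v' w' : Fin n) (h : RootedTri u v' w') (p q : Fin n), H.Adj p q →
        (supportGraph (x - indic u v' - indic u w' + indic v' w')).Adj p q := by
      intro v' w' h p q hpq
      obtain ⟨hne, hev⟩ := hpq
      refine ⟨hne, ?_⟩
      rw [ev_ne _ hne] at hev ⊢
      have hu_not : ¬ u ∈ (edg hne).val := by
        intro hu_in
        have : punct x u (edg hne) = 0 := by unfold punct; rw [if_pos hu_in]
        rw [this] at hev
        exact lt_irrefl 0 hev
      have hxe : 0 < x (edg hne) := by
        have : punct x u (edg hne) = x (edg hne) := by unfold punct; rw [if_neg hu_not]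
        rwa [this] at hev
      have h1 : edg hne ≠ edg h.2.1 := fun hc => hu_not (by rw [hc, mem_edg]; exact Or.inl rfl)
      have h2 : edg hne ≠ edg h.2.2 := fun hc => hu_not (by rw [hc, mem_edg]; exact Or.inl rfl)
      rw [hyval_gen v' w' h, if_neg h1, if_neg h2]
      have h3 : (0:ℝ) ≤ (if edg hne = edg h.1 then 1 else 0) := by positivity
      linarith
    have hsurv_ut : ∀ (v' w' : Fin n) (h : RootedTri u v' w') (t : Fin n), t ∈ Nb → t ≠ v' →
        t ≠ w' → (supportGraph (x - indic u v' - indic u w' + indic v' w')).Adj u t := by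
      intro v' w' h t htNb htv htw
      have hut : u ≠ t := (hNb_mem.mp htNb).1
      refine ⟨hut, ?_⟩
      rw [ev_ne _ hut, hyval_gen v' w' h]
      have h1 : edg hut ≠ edg h.2.1 := by
        intro hc; rw [edg_eq_iff] at hc
        rcases hc with ⟨-, hc⟩ | ⟨hc, -⟩
        exacts [htv hc, h.2.1 hc]
      have h2 : edg hut ≠ edg h.2.2 := by
        intro hc; rw [edg_eq_iff] at hc
        rcases hc with ⟨-, hc⟩ | ⟨hc, -⟩
        exacts [htw hc, h.2.2 hc]
      have h3 : edg hut ≠ edg h.1 := by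
        intro hc; rw [edg_eq_iff] at hc
        rcases hc with ⟨hc, -⟩ | ⟨hc, -⟩
        exacts [h.2.1 hc, h.2.2 hc]
      rw [if_neg h1, if_neg h2, if_neg h3]
      have : x (edg hut) = 1 := by rw [← ev_ne x hut]; exact hall t htNb
      rw [this]
      norm_num
    have common : ∀ (v' w' : Fin n) (h : RootedTri u v' w'),
        (∀ q ∈ Nb, (supportGraph (x - indic u v' - indic u w' + indic v' w')).Reachable q u) →
        (supportGraph (x - indic u v' - indic u w' + indic v' w')).Connected := by
      intro v' w' h hRu
      set y := x - indic u v' - indic u w' + indic v' w' with hy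
      have hSclosed : ∀ p q : Fin n, p ∈ {r : Fin n | (supportGraph y).Reachable r u} →
          (supportGraph x).Adj p q → q ∈ {r : Fin n | (supportGraph y).Reachable r u} := by
        intro p q hp hpq
        by_cases hqu : q = u
        · rw [hqu]; exact SimpleGraph.Reachable.refl u
        · by_cases hpu : p = u
          · have hqNb : q ∈ Nb := hNb_mem.mpr (hpu ▸ hpq)
            exact hRu q hqNb
          · have hHadj : H.Adj p q := punct_adj_of_adj hpq hpu hqu
            have hyadj : (supportGraph y).Adj p q := hsurv_gen v' w' h p q hHadj
            exact hyadj.symm.reachable.trans hp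
      have hally : ∀ p, (supportGraph y).Reachable p u := by
        intro p
        exact closed_reach hSclosed (hconn.preconnected u p) (SimpleGraph.Reachable.refl u)
      haveI := hconn.nonempty
      exact ⟨fun p q => (hally p).trans (hally q).symm⟩
    by_cases hsplit : ∃ w ∈ Nb, ¬ H.Reachable v w
    · -- case (ii) : some neighbour in another component
      obtain ⟨w, hwNb, hnr⟩ := hsplit
      have hwv : w ≠ v := by
        intro hc; subst hc; exact hnr (SimpleGraph.Reachable.refl w)
      have huw : u ≠ w := (hNb_mem.mp hwNb).1
      have h : RootedTri u v w := ⟨fun hc => hwv hc.symm, huv, huw⟩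
      have reach_to_u : ∀ q ∈ Nb,
          (supportGraph (x - indic u v - indic u w + indic v w)).Reachable q u := by
        intro q hq
        obtain ⟨q2, hq2Nb, hq2ne, hq2r⟩ := SN q hq
        by_cases hc1 : q2 = v
        · obtain ⟨v2, hv2Nb, hv2ne, hv2r⟩ := SN v hvNb
          have hv2w : v2 ≠ w := by
            intro hc; subst hc; exact hnr hv2r
          have hqv2 : H.Reachable q v2 := (hc1 ▸ hq2r).trans hv2r
          have := reach_mono (fun p' q' hpq' => (hsurv_gen v w h p' q' hpq').reachable) hqv2
          exact this.trans (hsurv_ut v w h v2 hv2Nb hv2ne hv2w).symm.reachable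
        · by_cases hc2 : q2 = w
          · obtain ⟨w2, hw2Nb, hw2ne, hw2r⟩ := SN w hwNb
            have hw2v : w2 ≠ v := by
              intro hc; subst hc
              exact hnr hw2r.symm
            have hqw2 : H.Reachable q w2 := (hc2 ▸ hq2r).trans hw2r
            have := reach_mono (fun p' q' hpq' => (hsurv_gen v w h p' q' hpq').reachable) hqw2
            exact this.trans (hsurv_ut v w h w2 hw2Nb hw2v hw2ne).symm.reachable
          · have := reach_mono (fun p' q' hpq' => (hsurv_gen v w h p' q' hpq').reachable) hq2r
            exact this.trans (hsurv_ut v w h q2 hq2Nb hc1 hc2).symm.reachable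
      obtain ⟨x', h1, h2, h3⟩ := shortcutA_core hx' h (hNb_mem.mp hvNb).2 (hNb_mem.mp hwNb).2
        hdeg4 (common v w h reach_to_u)
      exact ⟨x', h1, h2, Or.inl ⟨v, w, h, h3⟩⟩
    · -- case (i) : all neighbours in the component of v
      push_neg at hsplit
      have herase1 : (Nb.erase v).Nonempty := by
        apply Finset.card_pos.mp
        rw [Finset.card_erase_of_mem hvNb]
        omega
      obtain ⟨w, hw⟩ := herase1
      have hwv : w ≠ v := (Finset.mem_erase.mp hw).1
      have hwNb : w ∈ Nb := (Finset.mem_erase.mp hw).2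
      have huw : u ≠ w := (hNb_mem.mp hwNb).1
      have herase2 : ((Nb.erase v).erase w).Nonempty := by
        apply Finset.card_pos.mp
        rw [Finset.card_erase_of_mem hw, Finset.card_erase_of_mem hvNb]
        omega
      obtain ⟨t, ht⟩ := herase2
      have htw : t ≠ w := (Finset.mem_erase.mp ht).1
      have htv : t ≠ v := (Finset.mem_erase.mp (Finset.mem_erase.mp ht).2).1
      have htNb : t ∈ Nb := (Finset.mem_erase.mp (Finset.mem_erase.mp ht).2).2
      have h : RootedTri u v w := ⟨fun hc => hwv hc.symm, huv, huw⟩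
      have reach_to_u : ∀ q ∈ Nb,
          (supportGraph (x - indic u v - indic u w + indic v w)).Reachable q u := by
        intro q hq
        have hqt : H.Reachable q t := (hsplit q hq).symm.trans (hsplit t htNb)
        have := reach_mono (fun p' q' hpq' => (hsurv_gen v w h p' q' hpq').reachable) hqt
        exact this.trans (hsurv_ut v w h t htNb htv htw).symm.reachable
      obtain ⟨x', h1, h2, h3⟩ := shortcutA_core hx' h (hNb_mem.mp hvNb).2 (hNb_mem.mp hwNb).2
        hdeg4 (common v w h reach_to_u)
      exact ⟨x', h1, h2, Or.inl ⟨v, w, h, h3⟩⟩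

/-! ### extraction of a Hamiltonian cycle from a connected 2-regular vector -/

def seqF (oth : Fin n → Fin n → Fin n) (v0 v1 : Fin n) : ℕ → Fin n × Fin n
  | 0 => (v0, v1)
  | (k+1) => ((seqF oth v0 v1 k).2, oth (seqF oth v0 v1 k).2 (seqF oth v0 v1 k).1)

lemma eulerian_deg2 (hn : 5 ≤ n) {x : Edge n → ℝ} (hx : IsEulerian x)
    (h2 : ∀ s, degree x s = 2) : ∃ σ : Equiv.Perm (Fin n), x = hamVec σ := by
  classical
  obtain ⟨hint, hconn, -⟩ := hx
  have hnpos : 0 < n := by omega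
  -- step 1 : all values are 0 or 1
  have values01 : ∀ e, x e = 0 ∨ x e = 1 := by
    intro e
    obtain ⟨p, q, hpq, rfl⟩ := edge_cases e
    obtain ⟨m, hm⟩ := hint (edg hpq)
    rcases (by omega : m = 0 ∨ m = 1 ∨ 2 ≤ m) with h | h | h
    · left; rw [hm, h]; norm_num
    · right; rw [hm, h]; norm_num
    · exfalso
      have hev2 : (2:ℝ) ≤ ev x p q := by
        rw [ev_ne x hpq, hm]; exact_mod_cast h
      -- p's only neighbour is q
      have honly : ∀ (p' q' : Fin n), p' ≠ q' → (2:ℝ) ≤ ev x p' q' →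
          ∀ r, r ≠ p' → r ≠ q' → ev x p' r = 0 := by
        intro p' q' hne hev r hrp hrq
        have hdeg := h2 p'
        rw [degree_eq_sum_ev] at hdeg
        have hq'm : q' ∈ Finset.univ.erase p' := Finset.mem_erase.mpr ⟨hne.symm, Finset.mem_univ _⟩
        have hsplit := Finset.add_sum_erase _ (fun v => ev x p' v) hq'm
        have hrest_nonneg : ∀ v ∈ (Finset.univ.erase p').erase q', 0 ≤ ev x p' v :=
          fun v _ => ev_nonneg hint p' v
        have hrest : ∑ v ∈ (Finset.univ.erase p').erase q', ev x p' v = 0 := by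
          have h0 : 0 ≤ ∑ v ∈ (Finset.univ.erase p').erase q', ev x p' v :=
            Finset.sum_nonneg hrest_nonneg
          rw [← hsplit] at hdeg
          linarith
        have hr : r ∈ (Finset.univ.erase p').erase q' :=
          Finset.mem_erase.mpr ⟨hrq, Finset.mem_erase.mpr ⟨hrp, Finset.mem_univ _⟩⟩
        have := (Finset.sum_eq_zero_iff_of_nonneg hrest_nonneg).mp hrest r hr
        exact this
      have hev2' : (2:ℝ) ≤ ev x q p := by rwa [ev_symm]
      -- the set {p, q} is closed under adjacency
      have hclosed : ∀ r s : Fin n, r ∈ {t : Fin n | t = p ∨ t = q} → (supportGraph x).Adj r s →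
          s ∈ {t : Fin n | t = p ∨ t = q} := by
        rintro r s (rfl | rfl) ⟨hne, hev⟩
        · by_contra hs
          rw [Set.mem_setOf_eq] at hs
          push_neg at hs
          rw [honly r q hpq hev2 s (Ne.symm hne) hs.2] at hev
          exact lt_irrefl 0 hev
        · by_contra hs
          rw [Set.mem_setOf_eq] at hs
          push_neg at hs
          rw [honly r p hpq.symm hev2' s (Ne.symm hne) hs.1] at hev
          exact lt_irrefl 0 hev
      obtain ⟨z, hzp, hzq⟩ := exists_third (by omega) p q
      have := closed_reach hclosed (hconn.preconnected p z) (Or.inl rfl)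
      rcases this with h | h
      exacts [hzp h, hzq h]
  -- step 2 : every vertex has exactly two neighbours
  set nbr : Fin n → Finset (Fin n) :=
    fun p => Finset.univ.filter (fun q => (supportGraph x).Adj p q) with hnbr
  have hnbr_mem : ∀ {p q}, q ∈ nbr p ↔ (supportGraph x).Adj p q := by
    intro p q; rw [hnbr, Finset.mem_filter]; simp
  have hnbr_symm : ∀ {p q}, q ∈ nbr p → p ∈ nbr q := by
    intro p q h; exact hnbr_mem.mpr (hnbr_mem.mp h).symm
  have hcard_nbr : ∀ p, (nbr p).card = 2 := by
    intro p
    have hdeg := h2 p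
    rw [degree_eq_sum_ev] at hdeg
    have hsub : nbr p ⊆ Finset.univ.erase p := by
      intro q hq
      exact Finset.mem_erase.mpr ⟨((hnbr_mem.mp hq).1).symm, Finset.mem_univ q⟩
    have hzero : ∀ q ∈ Finset.univ.erase p, q ∉ nbr p → ev x p q = 0 := by
      intro q hq hqn
      have hqp : p ≠ q := fun hc => (Finset.mem_erase.mp hq).1 hc.symm
      have : ¬(0 < ev x p q) := fun hc => hqn (hnbr_mem.mpr ⟨hqp, hc⟩)
      have := ev_nonneg hint p q
      linarith
    rw [← Finset.sum_subset hsub hzero] at hdeg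
    have hone : ∀ q ∈ nbr p, ev x p q = 1 := by
      intro q hq
      obtain ⟨hqp, hpos⟩ := hnbr_mem.mp hq
      rcases values01 (edg hqp) with h | h
      · rw [ev_ne x hqp, h] at hpos; exact absurd hpos (lt_irrefl 0)
      · rw [ev_ne x hqp, h]
    rw [Finset.sum_congr rfl hone, Finset.sum_const, nsmul_eq_mul, mul_one] at hdeg
    exact_mod_cast hdeg
  -- step 3 : the "other neighbour" function
  have hoth : ∀ p q : Fin n, ∃ r, q ∈ nbr p →
      ((r ∈ nbr p ∧ r ≠ q) ∧ ∀ r', r' ∈ nbr p → r' ≠ q → r' = r) := by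
    intro p q
    by_cases hq : q ∈ nbr p
    · obtain ⟨c, d, hcd, hset⟩ := Finset.card_eq_two.mp (hcard_nbr p)
      rw [hset] at hq
      rcases Finset.mem_insert.mp hq with rfl | hq'
      · refine ⟨d, fun _ => ⟨⟨by rw [hset]; simp, hcd.symm⟩, ?_⟩⟩
        intro r' hr' hne
        rw [hset] at hr'
        rcases Finset.mem_insert.mp hr' with rfl | h
        · exact absurd rfl hne
        · exact Finset.mem_singleton.mp h
      · have hqd : q = d := Finset.mem_singleton.mp hq'
        subst hqd
        refine ⟨c, fun _ => ⟨⟨by rw [hset]; simp, hcd⟩, ?_⟩⟩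
        intro r' hr' hne
        rw [hset] at hr'
        rcases Finset.mem_insert.mp hr' with rfl | h
        · rfl
        · exact absurd (Finset.mem_singleton.mp h) hne
    · exact ⟨p, fun h => absurd h hq⟩
  choose oth hoth_spec using hoth
  have o1 : ∀ {p q}, q ∈ nbr p → oth p q ∈ nbr p := fun h => ((hoth_spec _ _ h).1).1
  have o2 : ∀ {p q}, q ∈ nbr p → oth p q ≠ q := fun h => ((hoth_spec _ _ h).1).2
  have o3 : ∀ {p q r}, q ∈ nbr p → r ∈ nbr p → r ≠ q → r = oth p q :=
    fun hq hr hne => (hoth_spec _ _ hq).2 _ hr hne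
  have o4 : ∀ {p q}, q ∈ nbr p → oth p (oth p q) = q := by
    intro p q hq
    exact (o3 (o1 hq) hq (Ne.symm (o2 hq))).symm
  -- step 4 : the cyclic sequence
  obtain ⟨v1, hv1⟩ : ∃ v1, v1 ∈ nbr ⟨0, hnpos⟩ := by
    have := hcard_nbr ⟨0, hnpos⟩
    have : (nbr ⟨0, hnpos⟩).Nonempty := Finset.card_pos.mp (by omega)
    exact this
  set v0 : Fin n := ⟨0, hnpos⟩ with hv0
  set F : ℕ → Fin n × Fin n := seqF oth v0 v1 with hF
  set a : ℕ → Fin n := fun k => (F k).1 with ha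
  have ha0 : a 0 = v0 := rfl
  have hFsnd : ∀ k, (F k).2 = a (k + 1) := fun k => rfl
  have hstep : ∀ k, a (k + 2) = oth (a (k + 1)) (a k) := fun k => rfl
  have hFpair : ∀ k, F k = (a k, a (k + 1)) := by
    intro k
    exact Prod.ext rfl (hFsnd k)
  have hadjseq : ∀ k, a (k + 1) ∈ nbr (a k) := by
    intro k
    induction k with
    | zero => exact hv1
    | succ m ih =>
      have : a m ∈ nbr (a (m + 1)) := hnbr_symm ih
      rw [hstep m]
      exact o1 this
  have hne1 : ∀ k, a (k + 1) ≠ a k := fun k => ((hnbr_mem.mp (hadjseq k)).1).symm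
  have hne2 : ∀ k, a (k + 2) ≠ a k := by
    intro k
    rw [hstep k]
    exact o2 (hnbr_symm (hadjseq k))
  have hback : ∀ k, oth (a (k + 1)) (a (k + 2)) = a k := by
    intro k
    rw [hstep k]
    exact o4 (hnbr_symm (hadjseq k))
  have hNchar : ∀ k, nbr (a (k + 1)) = {a k, a (k + 2)} := by
    intro k
    have hsub : ({a k, a (k + 2)} : Finset (Fin n)) ⊆ nbr (a (k + 1)) := by
      intro r hr
      rcases Finset.mem_insert.mp hr with rfl | hr
      · exact hnbr_symm (hadjseq k)
      · rw [Finset.mem_singleton.mp hr]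
        exact hadjseq (k + 1)
    have hcard : (nbr (a (k + 1))).card ≤ ({a k, a (k + 2)} : Finset (Fin n)).card := by
      rw [hcard_nbr, Finset.card_insert_of_notMem (by simpa using (hne2 k).symm),
        Finset.card_singleton]
    exact (Finset.eq_of_subset_of_card_le hsub hcard).symm
  -- step 5 : periodicity
  have hpeel : ∀ k, F k = (oth (F (k + 1)).1 (F (k + 1)).2, (F (k + 1)).1) := by
    intro k
    rw [hFpair k, hFpair (k + 1)]
    exact Prod.ext (by simp [hback k]) rfl
  obtain ⟨i0, j0, hij_ne, hFij⟩ := Finite.exists_ne_map_eq_of_infinite F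
  have hshift : ∀ i j, i ≤ j → F i = F j → F 0 = F (j - i) := by
    intro i
    induction i with
    | zero => intro j _ h; rw [Nat.sub_zero]; exact h
    | succ m ih =>
      intro j hle h
      obtain ⟨j', rfl⟩ : ∃ j', j = j' + 1 := ⟨j - 1, by omega⟩
      have : F m = F j' := by
        rw [hpeel m, hpeel j', h]
      have := ih j' (by omega) this
      rw [this]
      congr 1
      omega
  have hFex : ∃ d, 0 < d ∧ F 0 = F d := by
    rcases Nat.lt_or_ge i0 j0 with h | h
    · exact ⟨j0 - i0, by omega, hshift i0 j0 (by omega) hFij⟩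
    · have hlt : j0 < i0 := by omega
      exact ⟨i0 - j0, by omega, hshift j0 i0 (by omega) hFij.symm⟩
  set d : ℕ := Nat.find hFex with hd
  obtain ⟨hdpos, hdper0⟩ : 0 < d ∧ F 0 = F d := Nat.find_spec hFex
  have hdmin : ∀ d', 0 < d' → F 0 = F d' → d ≤ d' := by
    intro d' hpos hper
    by_contra hcon
    exact Nat.find_min hFex (by omega) ⟨hpos, hper⟩
  have hper : ∀ k, F (k + d) = F k := by
    intro k
    induction k with
    | zero => rw [Nat.zero_add]; exact hdper0.symm
    | succ m ih =>
      have e : m + 1 + d = (m + d) + 1 := by omega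
      rw [e]
      have h1 : F (m + d + 1) = ((F (m + d)).2, oth (F (m + d)).2 (F (m + d)).1) := rfl
      have h2 : F (m + 1) = ((F m).2, oth (F m).2 (F m).1) := rfl
      rw [h1, h2, ih]
  have haper : ∀ k, a (k + d) = a k := by
    intro k
    show (F (k + d)).1 = (F k).1
    rw [hper k]
  -- step 6 : injectivity on [0, d)
  have hinj : ∀ gap, ∀ i j, j = i + gap → 0 < gap → gap < d → a i ≠ a j := by
    intro gap
    induction gap using Nat.strong_induction_on with
    | _ gap ih =>
      intro i j hj hpos hlt heq
      rcases (by omega : gap = 1 ∨ gap = 2 ∨ 3 ≤ gap) with h1 | h1 | h1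
      · subst hj; rw [h1] at heq
        exact hne1 i heq.symm
      · subst hj; rw [h1] at heq
        exact hne2 i heq.symm
      · -- use the neighbourhood characterization
        have hi' : nbr (a i) = {a (i + d - 1), a (i + 1)} := by
          have := hNchar (i + d - 1)
          have e1 : i + d - 1 + 1 = i + d := by omega
          have e2 : i + d - 1 + 2 = i + d + 1 := by omega
          rw [e1, e2] at this
          rw [haper i] at this
          have e3 : a (i + d + 1) = a (i + 1) := by
            have : i + d + 1 = (i + 1) + d := by omega
            rw [this, haper (i + 1)]
          rw [e3] at this
          exact this
        have hj' : nbr (a j) = {a (j + d - 1), a (j + 1)} := by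
          have := hNchar (j + d - 1)
          have e1 : j + d - 1 + 1 = j + d := by omega
          have e2 : j + d - 1 + 2 = j + d + 1 := by omega
          rw [e1, e2] at this
          rw [haper j] at this
          have e3 : a (j + d + 1) = a (j + 1) := by
            have : j + d + 1 = (j + 1) + d := by omega
            rw [this, haper (j + 1)]
          rw [e3] at this
          exact this
        have hsets : ({a (i + d - 1), a (i + 1)} : Finset (Fin n))
            = {a (j + d - 1), a (j + 1)} := by
          rw [← hi', ← hj', heq]
        have hcaseA : a (i + 1) = a (j + 1) → False := by
          intro hA
          have hFij : F i = F j := by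
            rw [hFpair i, hFpair j, heq, hA]
          have := hshift i j (by omega) hFij
          have hgap_per : F 0 = F gap := by rw [this]; congr 1; omega
          have := hdmin gap hpos hgap_per
          omega
        have hmem : a (i + 1) ∈ ({a (j + d - 1), a (j + 1)} : Finset (Fin n)) := by
          rw [← hsets]; simp
        rcases Finset.mem_insert.mp hmem with hB | hA'
        · -- a (i+1) = a (j + d - 1) = a (j - 1)
          have hmem2 : a (j + 1) ∈ ({a (i + d - 1), a (i + 1)} : Finset (Fin n)) := by
            rw [hsets]; simp
          rcases Finset.mem_insert.mp hmem2 with hB2 | hA2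
          · -- genuine reversal : recurse with (i+1, j-1)
            have hjd : a (j + d - 1) = a (j - 1) := by
              have : j + d - 1 = (j - 1) + d := by omega
              rw [this, haper (j - 1)]
            have heq' : a (i + 1) = a (j - 1) := by rw [hB, hjd]
            exact ih (gap - 2) (by omega) (i + 1) (j - 1) (by omega) (by omega) (by omega) heq'
          · exact hcaseA (Finset.mem_singleton.mp hA2).symm
        · exact hcaseA (Finset.mem_singleton.mp hA')
  -- step 7 : d = n
  have hmod : ∀ k, a k = a (k % d) := by
    intro k
    induction k using Nat.strong_induction_on with
    | _ k ih =>
      rcases Nat.lt_or_ge k d with h | h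
      · rw [Nat.mod_eq_of_lt h]
      · have h1 : k = (k - d) + d := by omega
        have h2 : a k = a (k - d) := by
          conv_lhs => rw [h1]
          exact haper (k - d)
        rw [h2, ih (k - d) (by omega)]
        congr 1
        exact (Nat.mod_eq_sub_mod h).symm
  have hd_le : d ≤ n := by
    have hinjOn : Set.InjOn a (Finset.range d) := by
      intro i hi j hj hij
      simp only [Finset.coe_range, Set.mem_Iio] at hi hj
      by_contra hne
      rcases Nat.lt_or_ge i j with h | h
      · exact hinj (j - i) i j (by omega) (by omega) (by omega) hij
      · exact hinj (i - j) j i (by omega) (by omega) (by omega) hij.symm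
    have := Finset.card_image_of_injOn hinjOn
    have hsub : (Finset.range d).image a ⊆ Finset.univ := Finset.subset_univ _
    have := Finset.card_le_card hsub
    rw [Finset.card_image_of_injOn hinjOn, Finset.card_range, Finset.card_univ,
      Fintype.card_fin] at this
    exact this
  have hclosed : ∀ p q : Fin n, p ∈ {r : Fin n | ∃ k, a k = r} → (supportGraph x).Adj p q →
      q ∈ {r : Fin n | ∃ k, a k = r} := by
    rintro p q ⟨k, rfl⟩ hadj
    have h1 : q ∈ nbr (a k) := hnbr_mem.mpr hadj
    have hk1 : a (k + d) = a k := haper k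
    have h2 : q ∈ nbr (a (k + d)) := by rwa [hk1]
    have hkd : k + d = (k + d - 1) + 1 := by omega
    rw [hkd, hNchar (k + d - 1)] at h2
    rcases Finset.mem_insert.mp h2 with h | h
    · exact ⟨k + d - 1, h.symm⟩
    · rw [Finset.mem_singleton] at h
      exact ⟨k + d - 1 + 2, h.symm⟩
  have hcover : ∀ q : Fin n, ∃ k, a k = q := by
    intro q
    exact closed_reach hclosed (hconn.preconnected (a 0) q) ⟨0, rfl⟩
  have hn_le : n ≤ d := by
    have hsub : (Finset.univ : Finset (Fin n)) ⊆ (Finset.range d).image a := by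
      intro q _
      obtain ⟨k, hk⟩ := hcover q
      rw [Finset.mem_image]
      exact ⟨k % d, Finset.mem_range.mpr (Nat.mod_lt _ hdpos), by rw [← hmod k, hk]⟩
    calc n = (Finset.univ : Finset (Fin n)).card := by rw [Finset.card_univ, Fintype.card_fin]
      _ ≤ ((Finset.range d).image a).card := Finset.card_le_card hsub
      _ ≤ (Finset.range d).card := Finset.card_image_le
      _ = d := Finset.card_range d
  have hdn : d = n := le_antisymm hd_le hn_le
  have hper_mul : ∀ k m, a (k + m * d) = a k := by
    intro k m
    induction m with
    | zero => simp
    | succ mm ih =>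
      have : k + (mm + 1) * d = (k + mm * d) + d := by ring
      rw [this, haper (k + mm * d), ih]
  have hmod1 : ∀ k, a (k % d + 1) = a (k + 1) := by
    intro k
    conv_rhs => rw [show k + 1 = (k % d + 1) + (k / d) * d from by
      rw [Nat.add_right_comm, Nat.mod_add_div']]
    rw [hper_mul]
  -- step 8 : the permutation
  have hinj_fin : Function.Injective (fun i : Fin n => a i.val) := by
    intro i j hij
    by_contra hne
    have hne' : i.val ≠ j.val := fun hc => hne (Fin.ext hc)
    have hi := i.isLt
    have hj := j.isLt
    rcases Nat.lt_or_ge i.val j.val with h | h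
    · exact hinj (j.val - i.val) i.val j.val (by omega) (by omega) (by omega) hij
    · exact hinj (i.val - j.val) j.val i.val (by omega) (by omega) (by omega) hij.symm
  set σ : Equiv.Perm (Fin n) :=
    Equiv.ofBijective _ ((Finite.injective_iff_bijective).mp hinj_fin) with hσ
  have hσval : ∀ i : Fin n, σ i = a i.val := fun i => rfl
  have hσnext : ∀ i : Fin n, σ (nextF i) = a (i.val + 1) := by
    intro i
    rw [hσval]
    show a ((i.val + 1) % n) = a (i.val + 1)
    have he : (i.val + 1) % n = (i.val + 1) % d := by rw [hdn]
    rw [he]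
    exact (hmod (i.val + 1)).symm
  refine ⟨σ, ?_⟩
  funext e
  obtain ⟨p, q, hpq, rfl⟩ := edge_cases e
  have hiff : 0 < x (edg hpq) ↔ ∃ i : Fin n, (edg hpq).val = s(σ i, σ (nextF i)) := by
    constructor
    · intro hpos
      have hadj : (supportGraph x).Adj p q := ⟨hpq, by rw [ev_ne x hpq]; exact hpos⟩
      obtain ⟨k0, hk0⟩ := hcover p
      have h1 : q ∈ nbr (a k0) := by rw [hk0]; exact hnbr_mem.mpr hadj
      have hk1 : a (k0 + d) = a k0 := haper k0
      have h2 : q ∈ nbr (a (k0 + d)) := by rwa [hk1]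
      have hkd : k0 + d = (k0 + d - 1) + 1 := by omega
      rw [hkd, hNchar (k0 + d - 1)] at h2
      have hplt : k0 % d < n := by rw [hdn] at hdpos ⊢; exact Nat.mod_lt _ hdpos
      rcases Finset.mem_insert.mp h2 with h | h
      · -- q = a (k0 + d - 1) : the edge is (a j, a (j+1)) with j = k0 + d - 1
        set j := k0 + d - 1 with hjdef
        have hjq : a j = q := h.symm
        have hjp : a (j + 1) = p := by
          rw [show j + 1 = k0 + d by omega, hk1, hk0]
        have hjlt : j % d < n := by rw [hdn] at hdpos ⊢; exact Nat.mod_lt _ hdpos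
        refine ⟨⟨j % d, hjlt⟩, ?_⟩
        have e1 : σ ⟨j % d, hjlt⟩ = a j := by
          rw [hσval]
          show a (j % d) = a j
          exact (hmod j).symm
        have e2 : σ (nextF ⟨j % d, hjlt⟩) = a (j + 1) := by
          rw [hσnext]
          show a (j % d + 1) = a (j + 1)
          exact hmod1 j
        rw [e1, e2, hjq, hjp]
        exact Sym2.eq_swap
      · rw [Finset.mem_singleton] at h
        have hq' : a (k0 + d - 1 + 2) = q := h.symm
        have hq2 : a (k0 + 1) = q := by
          rw [show k0 + d - 1 + 2 = (k0 + 1) + d by omega, haper (k0 + 1)] at hq'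
          exact hq'
        refine ⟨⟨k0 % d, hplt⟩, ?_⟩
        have e1 : σ ⟨k0 % d, hplt⟩ = a k0 := by
          rw [hσval]
          show a (k0 % d) = a k0
          exact (hmod k0).symm
        have e2 : σ (nextF ⟨k0 % d, hplt⟩) = a (k0 + 1) := by
          rw [hσnext]
          show a (k0 % d + 1) = a (k0 + 1)
          exact hmod1 k0
        rw [e1, e2, hk0, hq2]
        rfl
    · rintro ⟨i, hi⟩
      have hne : a i.val ≠ a (i.val + 1) := (hne1 i.val).symm
      have hedge : edg hpq = edg hne := by
        apply Subtype.ext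
        rw [hi, hσnext i]
        rfl
      rw [hedge, ← ev_ne x hne]
      exact (hnbr_mem.mp (hadjseq i.val)).2
  rcases values01 (edg hpq) with hv | hv
  · have hnex : ¬ ∃ i : Fin n, (edg hpq).val = s(σ i, σ (nextF i)) := by
      intro hex
      have := hiff.mpr hex
      rw [hv] at this
      exact lt_irrefl 0 this
    show x (edg hpq) = hamVec σ (edg hpq)
    unfold hamVec
    rw [if_neg hnex, hv]
  · have hex := hiff.mp (by rw [hv]; norm_num)
    show x (edg hpq) = hamVec σ (edg hpq)
    unfold hamVec
    rw [if_pos hex, hv]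

/-! ### validity of rotated inequalities over the graphical polyhedron -/

lemma deg4_of_ne2 {x : Edge n → ℝ} (hx : IsEulerian x) {u : Fin n}
    (hne : degree x u ≠ 2) : 4 ≤ degree x u := by
  obtain ⟨m, hm0, hdm⟩ := hx.2.2 u
  have hm1 : m ≠ 1 := by
    intro hc
    rw [hc] at hdm
    apply hne
    rw [hdm]; norm_num
  have hm2 : 2 ≤ m := by omega
  rw [hdm]
  have : (2:ℝ) ≤ m := by exact_mod_cast hm2
  linarith

lemma valid_P (hn : 5 ≤ n) {a : Edge n → ℝ}
    (hval : ∀ x ∈ stsp n, dot a (zvec n) - 1 ≤ dot a x)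
    {ξ : Fin n → ℝ} (hξ : ∀ u, -lam a u ≤ ξ u) :
    ∀ x, IsEulerian x →
      dot a (zvec n) - 1 + ∑ u, ξ u ≤ dot a x + ∑ u, ξ u * dot (delta u) x := by
  suffices H : ∀ N (x : Edge n → ℝ), IsEulerian x → sz x = N →
      dot a (zvec n) - 1 + ∑ u, ξ u ≤ dot a x + ∑ u, ξ u * dot (delta u) x by
    exact fun x hx => H (sz x) x hx rfl
  intro N
  induction N using Nat.strong_induction_on with
  | _ N ih =>
    intro x hx hszx
    by_cases hall2 : ∀ u, degree x u = 2
    · obtain ⟨σ, rfl⟩ := eulerian_deg2 hn hx hall2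
      have h1 : ∀ u, ξ u * dot (delta u) (hamVec σ) = ξ u := by
        intro u
        rw [dot_delta_hamVec (by omega) σ u, mul_one]
      rw [Finset.sum_congr rfl (fun u _ => h1 u)]
      have := hval (hamVec σ) (hamVec_mem_stsp σ)
      linarith
    · push_neg at hall2
      obtain ⟨u, hu⟩ := hall2
      have hdeg4 := deg4_of_ne2 hx hu
      obtain ⟨x', hx', hsz', hcase⟩ := eulerian_shortcut hx hdeg4
      rcases hcase with ⟨v, w, h, heq⟩ | ⟨v, huv, heq⟩
      · rw [heq, dot_detour a h x', sum_xi_detour ξ h x']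
        have hIH := ih (sz x') (by omega) x' hx' rfl
        have h1 : lam a u ≤ tri a u v w := lam_le (by omega) a h
        have h2 := hξ u
        linarith
      · rw [heq, dot_double a huv x', sum_xi_double ξ huv x']
        have hIH := ih (sz x') (by omega) x' hx' rfl
        have h1 : lam a u + lam a v ≤ 2 * ev a u v := two_lam_le (by omega) a huv
        have h2 := hξ u
        have h3 := hξ v
        linarith

lemma Eu_elem_iff (a : Edge n → ℝ) {u v w : Fin n} (h : RootedTri u v w) :
    edg h.1 ∈ Eu a u ↔ tri a u v w = lam a u := by
  constructor
  · rintro ⟨v', w', h', hval, htri⟩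
    rw [edg_val, Sym2.eq_iff] at hval
    rcases hval with ⟨rfl, rfl⟩ | ⟨rfl, rfl⟩
    · exact htri
    · rw [tri_swap]
      exact htri
  · intro ht
    exact ⟨v, w, h, rfl, ht⟩

lemma tight_transfer (hn : 5 ≤ n) {a b : Edge n → ℝ}
    (hvala : ∀ x ∈ stsp n, dot a (zvec n) - 1 ≤ dot a x)
    (hF : faceS a = faceS b) (hE : ∀ u, Eu a u = Eu b u)
    {ξ ξ' : Fin n → ℝ} (hξ : ∀ u, -lam a u ≤ ξ u)
    (hξ' : ∀ u, ξ' u = ξ u + lam a u - lam b u) :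
    ∀ x, IsEulerian x →
      dot a x + ∑ u, ξ u * dot (delta u) x = dot a (zvec n) - 1 + ∑ u, ξ u →
      dot b x + ∑ u, ξ' u * dot (delta u) x = dot b (zvec n) - 1 + ∑ u, ξ' u := by
  suffices H : ∀ N (x : Edge n → ℝ), IsEulerian x → sz x = N →
      dot a x + ∑ u, ξ u * dot (delta u) x = dot a (zvec n) - 1 + ∑ u, ξ u →
      dot b x + ∑ u, ξ' u * dot (delta u) x = dot b (zvec n) - 1 + ∑ u, ξ' u by
    exact fun x hx => H (sz x) x hx rfl
  intro N
  induction N using Nat.strong_induction_on with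
  | _ N ih =>
    intro x hx hszx htight
    by_cases hall2 : ∀ u, degree x u = 2
    · obtain ⟨σ, rfl⟩ := eulerian_deg2 hn hx hall2
      have h1 : ∀ (c : Fin n → ℝ), ∑ u, c u * dot (delta u) (hamVec σ) = ∑ u, c u := by
        intro c
        apply Finset.sum_congr rfl
        intro u _
        rw [dot_delta_hamVec (by omega) σ u, mul_one]
      rw [h1] at htight ⊢
      have hfa : hamVec σ ∈ faceS a := ⟨hamVec_mem_stsp σ, by linarith⟩
      rw [hF] at hfa
      have := hfa.2
      linarith
    · push_neg at hall2
      obtain ⟨u, hu⟩ := hall2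
      have hdeg4 := deg4_of_ne2 hx hu
      obtain ⟨x', hx', hsz', hcase⟩ := eulerian_shortcut hx hdeg4
      have hIHv := valid_P hn hvala hξ x' hx'
      rcases hcase with ⟨v, w, h, heq⟩ | ⟨v, huv, heq⟩
      · rw [heq, dot_detour a h x', sum_xi_detour ξ h x'] at htight
        rw [heq, dot_detour b h x', sum_xi_detour ξ' h x']
        have h1 : lam a u ≤ tri a u v w := lam_le (by omega) a h
        have h2 := hξ u
        -- pin down the slack pieces
        have htri_a : tri a u v w = lam a u := by linarith
        have hξu : ξ u = -lam a u := by linarith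
        have htight' : dot a x' + ∑ s, ξ s * dot (delta s) x'
            = dot a (zvec n) - 1 + ∑ s, ξ s := by linarith
        have hIH := ih (sz x') (by omega) x' hx' rfl htight'
        have hEu_a : edg h.1 ∈ Eu a u := (Eu_elem_iff a h).mpr htri_a
        have hEu_b : edg h.1 ∈ Eu b u := by rw [← hE u]; exact hEu_a
        have htri_b : tri b u v w = lam b u := (Eu_elem_iff b h).mp hEu_b
        have hxu' : ξ' u = -lam b u := by rw [hξ' u, hξu]; ring
        rw [htri_b]
        linarith [hIH, hxu']
      · rw [heq, dot_double a huv x', sum_xi_double ξ huv x'] at htight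
        rw [heq, dot_double b huv x', sum_xi_double ξ' huv x']
        have h1 : lam a u + lam a v ≤ 2 * ev a u v := two_lam_le (by omega) a huv
        have h2 := hξ u
        have h3 := hξ v
        have hev_a : 2 * ev a u v = lam a u + lam a v := by linarith
        have hξu : ξ u = -lam a u := by linarith
        have hξv : ξ v = -lam a v := by linarith
        have htight' : dot a x' + ∑ s, ξ s * dot (delta s) x'
            = dot a (zvec n) - 1 + ∑ s, ξ s := by linarith
        have hIH := ih (sz x') (by omega) x' hx' rfl htight'
        -- both triangles through any third vertex are tight
        obtain ⟨w, hwu, hwv⟩ := exists_third (by omega : 3 ≤ n) u v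
        have h4 : RootedTri u v w := ⟨fun hc => hwv hc.symm, huv, fun hc => hwu hc.symm⟩
        have h5 : RootedTri v u w := ⟨fun hc => hwu hc.symm, huv.symm, fun hc => hwv hc.symm⟩
        have h6 := lam_le (by omega : 3 ≤ n) a h4
        have h7 := lam_le (by omega : 3 ≤ n) a h5
        have h8 := tri_add_tri a u v w
        have htri_a1 : tri a u v w = lam a u := by linarith
        have htri_a2 : tri a v u w = lam a v := by linarith
        have hEu_b1 : edg h4.1 ∈ Eu b u := by rw [← hE u]; exact (Eu_elem_iff a h4).mpr htri_a1
        have hEu_b2 : edg h5.1 ∈ Eu b v := by rw [← hE v]; exact (Eu_elem_iff a h5).mpr htri_a2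
        have htri_b1 : tri b u v w = lam b u := (Eu_elem_iff b h4).mp hEu_b1
        have htri_b2 : tri b v u w = lam b v := (Eu_elem_iff b h5).mp hEu_b2
        have h9 := tri_add_tri b u v w
        have hev_b : 2 * ev b u v = lam b u + lam b v := by linarith
        have hxu' : ξ' u = -lam b u := by rw [hξ' u, hξu]; ring
        have hxv' : ξ' v = -lam b v := by rw [hξ' v, hξv]; ring
        linarith [hIH, hxu', hxv']

/-! ### the lower bound on valid rotations -/

lemma tour_tight_through (hn : 5 ≤ n) {a : Edge n → ℝ} (ha : a ∈ DS n) (e : Edge n) :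
    ∃ σ : Equiv.Perm (Fin n), dot a (hamVec σ) = dot a (zvec n) - 1 ∧
      1 ≤ hamVec σ e := by
  obtain ⟨x₀, hx₀F, hx₀e⟩ := ha.2.2.2 e
  have hvalD : ∀ y ∈ {y : Edge n → ℝ | ∃ σ : Equiv.Perm (Fin n), y = hamVec σ},
      dot a (zvec n) - 1 ≤ dot a y := by
    intro y hy
    exact ha.2.1 y (subset_convexHull ℝ _ hy)
  obtain ⟨y, hyD, hyt, hye⟩ := hull_tight_witness hvalD hx₀F.1 hx₀F.2 hx₀e
    (fun y hy => by obtain ⟨σ, rfl⟩ := hy; exact hamVec_nonneg σ _)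
  obtain ⟨σ, rfl⟩ := hyD
  exact ⟨σ, hyt, NatLike.one_le (natlike_hamVec σ) hye⟩

lemma xi_lower (hn : 5 ≤ n) {a : Edge n → ℝ} (ha : a ∈ DS n) {ξ : Fin n → ℝ}
    (hval : ∀ x ∈ gtsp n,
      dot a (zvec n) - 1 + dot (∑ u, ξ u • delta u) (zvec n)
        ≤ dot (a + ∑ u, ξ u • delta u) x) :
    ∀ u, -lam a u ≤ ξ u := by
  intro u
  obtain ⟨v, w, h, htri⟩ := lam_spec (by omega : 3 ≤ n) a u
  obtain ⟨σ, hyt, hye1⟩ := tour_tight_through hn ha (edg h.1)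
  have hdet : IsEulerian (hamVec σ + indic u v + indic u w - indic v w) :=
    eulerian_detour (hamVec_eulerian (by omega) σ) h hye1
  have hv := hval _ (eulerian_mem_gtsp hdet)
  rw [dot_rot, rot_z (by omega : 2 ≤ n), dot_detour a h (hamVec σ),
    sum_xi_detour ξ h (hamVec σ)] at hv
  have hδ : ∀ s, ξ s * dot (delta s) (hamVec σ) = ξ s := fun s => by
    rw [dot_delta_hamVec (by omega) σ s, mul_one]
  rw [Finset.sum_congr rfl (fun s _ => hδ s), htri, hyt] at hv
  linarith

/-! ### forward direction pieces -/

lemma faceS_sub (hn : 5 ≤ n) {a b : Edge n → ℝ} (ha : a ∈ DS n) (hb : b ∈ DS n)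
    (hFr : Frot a = Frot b) : faceS a ⊆ faceS b := by
  have hGa : {x | x ∈ gtsp n ∧ dot (a + ∑ u, (fun s => -lam a s) u • delta u) x
      = dot a (zvec n) - 1 + dot (∑ u, (fun s => -lam a s) u • delta u) (zvec n)}
      ∈ Frot a := by
    refine ⟨fun s => -lam a s, ?_, rfl⟩
    intro x hx
    refine hull_le (fun y hy => ?_) hx
    rw [dot_rot, rot_z (by omega : 2 ≤ n)]
    exact valid_P hn ha.2.1 (fun u => le_refl _) y hy
  rw [hFr] at hGa
  obtain ⟨ξ', hval', hGeq⟩ := hGa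
  intro x hxa
  have hx_gtsp : x ∈ gtsp n := stsp_sub_gtsp (by omega) hxa.1
  have hxmem : x ∈ {x | x ∈ gtsp n ∧ dot (a + ∑ u, (fun s => -lam a s) u • delta u) x
      = dot a (zvec n) - 1 + dot (∑ u, (fun s => -lam a s) u • delta u) (zvec n)} := by
    refine ⟨hx_gtsp, ?_⟩
    rw [dot_rot, rot_z (by omega : 2 ≤ n)]
    have hδ : ∀ s : Fin n, (fun s => -lam a s) s * dot (delta s) x = -lam a s := by
      intro s
      rw [dot_delta_stsp (by omega) hxa.1 s, mul_one]
    rw [Finset.sum_congr rfl (fun s _ => hδ s), hxa.2]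
  rw [hGeq] at hxmem
  obtain ⟨-, htight⟩ := hxmem
  rw [dot_rot, rot_z (by omega : 2 ≤ n)] at htight
  have hδ' : ∀ s, ξ' s * dot (delta s) x = ξ' s := fun s => by
    rw [dot_delta_stsp (by omega) hxa.1 s, mul_one]
  rw [Finset.sum_congr rfl (fun s _ => hδ' s)] at htight
  exact ⟨hxa.1, by linarith⟩

lemma Eu_sub (hn : 5 ≤ n) {a b : Edge n → ℝ} (ha : a ∈ DS n) (hb : b ∈ DS n)
    (hFr : Frot a = Frot b) : ∀ u, Eu a u ⊆ Eu b u := by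
  have hGa : {x | x ∈ gtsp n ∧ dot (a + ∑ u, (fun s => -lam a s) u • delta u) x
      = dot a (zvec n) - 1 + dot (∑ u, (fun s => -lam a s) u • delta u) (zvec n)}
      ∈ Frot a := by
    refine ⟨fun s => -lam a s, ?_, rfl⟩
    intro x hx
    refine hull_le (fun y hy => ?_) hx
    rw [dot_rot, rot_z (by omega : 2 ≤ n)]
    exact valid_P hn ha.2.1 (fun u => le_refl _) y hy
  rw [hFr] at hGa
  obtain ⟨ξ', hval', hGeq⟩ := hGa
  intro u e he
  obtain ⟨v, w, h, hvale, htri⟩ := he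
  obtain ⟨σ, hyt, hye1⟩ := tour_tight_through hn ha (edg h.1)
  have hdet : IsEulerian (hamVec σ + indic u v + indic u w - indic v w) :=
    eulerian_detour (hamVec_eulerian (by omega) σ) h hye1
  have hδσ : ∀ (c : Fin n → ℝ), ∑ s, c s * dot (delta s) (hamVec σ) = ∑ s, c s := by
    intro c
    refine Finset.sum_congr rfl (fun s _ => ?_)
    rw [dot_delta_hamVec (by omega) σ s, mul_one]
  -- the detoured tour lies in the fully rotated face of a
  have hyG : (hamVec σ + indic u v + indic u w - indic v w)
      ∈ {x | x ∈ gtsp n ∧ dot (a + ∑ s, (fun s => -lam a s) s • delta s) x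
        = dot a (zvec n) - 1 + dot (∑ s, (fun s => -lam a s) s • delta s) (zvec n)} := by
    refine ⟨eulerian_mem_gtsp hdet, ?_⟩
    rw [dot_rot, rot_z (by omega : 2 ≤ n), dot_detour a h (hamVec σ),
      sum_xi_detour _ h (hamVec σ), hδσ, htri, hyt]
    ring
  rw [hGeq] at hyG
  obtain ⟨-, htb⟩ := hyG
  rw [dot_rot, rot_z (by omega : 2 ≤ n), dot_detour b h (hamVec σ),
    sum_xi_detour ξ' h (hamVec σ), hδσ] at htb
  have hvt := hval' (hamVec σ) (eulerian_mem_gtsp (hamVec_eulerian (by omega) σ))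
  rw [dot_rot, rot_z (by omega : 2 ≤ n), hδσ] at hvt
  have hlow := xi_lower hn hb hval' u
  have hge : lam b u ≤ tri b u v w := lam_le (by omega) b h
  have : tri b u v w = lam b u := by linarith
  exact ⟨v, w, h, hvale, this⟩

/-! ### backward direction -/

lemma Frot_sub (hn : 5 ≤ n) {a b : Edge n → ℝ} (ha : a ∈ DS n) (hb : b ∈ DS n)
    (hF : faceS a = faceS b) (hE : ∀ u, Eu a u = Eu b u) : Frot a ⊆ Frot b := by
  rintro G ⟨ξ, hval, rfl⟩
  have hξ : ∀ u, -lam a u ≤ ξ u := xi_lower hn ha hval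
  set ξ' : Fin n → ℝ := fun u => ξ u + lam a u - lam b u with hξ'def
  have hξ'_ge : ∀ u, -lam b u ≤ ξ' u := by
    intro u
    have := hξ u
    simp only [hξ'def]
    linarith
  have hpta : ∀ y ∈ {y : Edge n → ℝ | IsEulerian y},
      dot a (zvec n) - 1 + dot (∑ u, ξ u • delta u) (zvec n)
        ≤ dot (a + ∑ u, ξ u • delta u) y := by
    intro y hy
    rw [dot_rot, rot_z (by omega : 2 ≤ n)]
    exact valid_P hn ha.2.1 hξ y hy
  have hptb : ∀ y ∈ {y : Edge n → ℝ | IsEulerian y},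
      dot b (zvec n) - 1 + dot (∑ u, ξ' u • delta u) (zvec n)
        ≤ dot (b + ∑ u, ξ' u • delta u) y := by
    intro y hy
    rw [dot_rot, rot_z (by omega : 2 ≤ n)]
    exact valid_P hn hb.2.1 hξ'_ge y hy
  refine ⟨ξ', fun x hx => hull_le hptb hx, ?_⟩
  · ext x
    simp only [Set.mem_setOf_eq]
    constructor
    · rintro ⟨hx, ht⟩
      refine ⟨hx, ?_⟩
      refine hull_tight_transfer hpta ?_ hx ht
      intro y hy hty
      rw [dot_rot, rot_z (by omega : 2 ≤ n)] at hty ⊢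
      exact tight_transfer hn ha.2.1 hF hE hξ (fun u => rfl) y hy hty
    · rintro ⟨hx, ht⟩
      refine ⟨hx, ?_⟩
      refine hull_tight_transfer hptb ?_ hx ht
      intro y hy hty
      rw [dot_rot, rot_z (by omega : 2 ≤ n)] at hty ⊢
      refine tight_transfer hn hb.2.1 hF.symm (fun u => (hE u).symm) hξ'_ge ?_ y hy hty
      intro u
      simp only [hξ'def]
      ring
end Aux

/-- for `a, b ∈ D_S`, `𝔉(a) = 𝔉(b)` iff `F_a = F_b` and
`E^u(a) = E^u(b)` for all `u`. -/
theorem stmt16 (n : ℕ) (hn : 5 ≤ n) (a b : Edge n → ℝ)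
    (ha : a ∈ DS n) (hb : b ∈ DS n) :
    Frot a = Frot b ↔ (faceS a = faceS b ∧ ∀ u, Eu a u = Eu b u) := by
  constructor
  · intro hFr
    refine ⟨Set.Subset.antisymm (faceS_sub hn ha hb hFr) (faceS_sub hn hb ha hFr.symm),
      fun u => Set.Subset.antisymm (Eu_sub hn ha hb hFr u) (Eu_sub hn hb ha hFr.symm u)⟩
  · rintro ⟨hfa, hE⟩
    exact Set.Subset.antisymm (Frot_sub hn ha hb hfa hE)
      (Frot_sub hn hb ha hfa.symm (fun u => (hE u).symm))

end TSP
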